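/- arXiv:0707.0425 — 4 statements merged into one kernel-verified Lean document; each statement's English description precedes it below -/
import Mathlib

section
/- For the potential V(z) = |z|²/t₀ on ℂ, the scaled one-point function (1/N)R_N^{(1)}(z) = (1/(πt₀)) Σ_{n=0}^{N-1} (N/t₀)^n |z|^{2n}/n! · e^{-N|z|²/t₀} converges as N → ∞ to 1/(πt₀) if |z|² < t₀, to 1/(2πt₀) if |z|² = t₀, and to 0 if |z|² > t₀. -/
open Filter
open MeasureTheory Set Finset

lemma fact_le_pow_mul_fact (n d : ℕ) : (n + d).factorial ≤ (n + d) ^ d * n.factorial := by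
  induction d with
  | zero => simp
  | succ d ih =>
    have : (n + (d+1)).factorial = (n + d + 1) * (n + d).factorial := by
      rw [show n + (d+1) = (n+d)+1 by ring, Nat.factorial_succ]
    rw [this]
    calc (n + d + 1) * (n + d).factorial ≤ (n + d + 1) * ((n + d) ^ d * n.factorial) :=
          Nat.mul_le_mul_left _ ih
      _ ≤ (n + (d+1)) ^ (d+1) * n.factorial := by
          rw [pow_succ]
          have h1 : (n+d)^d ≤ (n+(d+1))^d := Nat.pow_le_pow_left (by omega) d
          calc (n + d + 1) * ((n + d) ^ d * n.factorial)
              = (n+d)^d * n.factorial * (n + (d+1)) := by ring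
            _ ≤ (n+(d+1))^d * n.factorial * (n+(d+1)) := by
                exact Nat.mul_le_mul_right _ (Nat.mul_le_mul_right _ h1)
            _ = (n+(d+1))^d * (n+(d+1)) * n.factorial := by ring

lemma pow_le_fact_mul_exp (N : ℕ) : (N:ℝ)^N ≤ N.factorial * Real.exp N := by
  have h1 := Finset.single_le_sum (f := fun i => (N:ℝ)^i / (i.factorial:ℝ))
    (fun i _ => by positivity) (Finset.self_mem_range_succ N)
  have h2 := Real.sum_le_exp_of_nonneg (x := (N:ℝ)) (Nat.cast_nonneg N) (N+1)
  have h3 : (N:ℝ)^N / N.factorial ≤ Real.exp N := h1.trans h2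
  have hfac : (0:ℝ) < N.factorial := by positivity
  rw [div_le_iff₀ hfac] at h3
  linarith [h3]

lemma q_lt_one {r : ℝ} (hr0 : 0 ≤ r) (hr1 : r ≠ 1) : r * Real.exp (1 - r) < 1 := by
  rcases eq_or_lt_of_le hr0 with h | h
  · rw [← h]; norm_num
  · have hlog := Real.log_lt_sub_one_of_pos h hr1
    have h0 : Real.log (r * Real.exp (1 - r)) < 0 := by
      rw [Real.log_mul (ne_of_gt h) (Real.exp_ne_zero _), Real.log_exp]; linarith
    have h2 := Real.exp_lt_exp.mpr h0
    rwa [Real.exp_log (by positivity), Real.exp_zero] at h2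

lemma exp_sub_partial_le {r : ℝ} (hr0 : 0 ≤ r) (hr1 : r < 1) (N : ℕ) :
    Real.exp (N*r) - ∑ n ∈ Finset.range N, ((N:ℝ)*r)^n/n.factorial
      ≤ ((N:ℝ)*r)^N/N.factorial * (1-r)⁻¹ := by
  set a : ℝ := (N:ℝ)*r with ha
  have ha0 : 0 ≤ a := by positivity
  have hsum : Summable (fun n => a^n/(n.factorial:ℝ)) := Real.summable_pow_div_factorial a
  have hexp : Real.exp a = ∑' n, a^n/(n.factorial:ℝ) := by
    rw [Real.exp_eq_exp_ℝ, NormedSpace.exp_eq_tsum_div]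
  have hsplit := Summable.sum_add_tsum_nat_add (f := fun n => a^n/(n.factorial:ℝ)) N hsum
  have hterm : ∀ k : ℕ, a^(k+N)/((k+N).factorial:ℝ) ≤ a^N/N.factorial * r^k := by
    intro k
    have hfac : (N.factorial:ℝ) * (N+1)^k ≤ ((N+k).factorial:ℝ) := by
      exact_mod_cast Nat.factorial_mul_pow_le_factorial
    have hfk : (0:ℝ) < ((k+N).factorial:ℝ) := by positivity
    rw [div_le_iff₀ hfk]
    have h1 : a^(k+N) = a^N * a^k := by rw [← pow_add]; ring_nf
    rw [h1]
    have key : a^k * (N.factorial:ℝ) ≤ r^k * ((k+N).factorial:ℝ) := by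
      have h2 : a^k ≤ r^k * ((N:ℝ)+1)^k := by
        rw [← mul_pow]
        apply pow_le_pow_left₀ ha0
        nlinarith [Nat.cast_nonneg (α := ℝ) N]
      calc a^k * (N.factorial:ℝ) ≤ r^k * ((N:ℝ)+1)^k * N.factorial := by
            apply mul_le_mul_of_nonneg_right h2 (by positivity)
        _ ≤ r^k * ((k+N).factorial:ℝ) := by
            rw [mul_assoc]
            apply mul_le_mul_of_nonneg_left _ (by positivity)
            rw [add_comm k N] at *
            calc ((N:ℝ)+1)^k * N.factorial = (N.factorial:ℝ) * (N+1)^k := by push_cast; ring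
              _ ≤ ((N+k).factorial:ℝ) := hfac
    rw [div_mul_eq_mul_div, div_mul_eq_mul_div, le_div_iff₀ (by positivity)]
    calc a^N * a^k * N.factorial = a^N * (a^k * N.factorial) := by ring
      _ ≤ a^N * (r^k * ((k+N).factorial:ℝ)) := by
          apply mul_le_mul_of_nonneg_left key (by positivity)
      _ = a^N * r^k * ((k+N).factorial:ℝ) := by ring
  have htail : ∑' k, a^(k+N)/((k+N).factorial:ℝ) ≤ a^N/N.factorial * (1-r)⁻¹ := by
    have hg : Summable (fun k : ℕ => a^N/N.factorial * r^k) :=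
      (summable_geometric_of_lt_one hr0 hr1).mul_left _
    calc ∑' k, a^(k+N)/((k+N).factorial:ℝ) ≤ ∑' k, a^N/N.factorial * r^k :=
          Summable.tsum_le_tsum hterm ((summable_nat_add_iff N).mpr hsum) hg
      _ = a^N/N.factorial * (1-r)⁻¹ := by
          rw [tsum_mul_left, tsum_geometric_of_lt_one hr0 hr1]
  have : Real.exp a - ∑ n ∈ Finset.range N, a^n/(n.factorial:ℝ)
      = ∑' k, a^(k+N)/((k+N).factorial:ℝ) := by
    rw [hexp, ← hsplit]; ring
  rw [show Real.exp ((N:ℝ)*r) = Real.exp a from rfl, this]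
  exact htail

lemma key_bound {r : ℝ} (hr0 : 0 ≤ r) (N : ℕ) :
    Real.exp (-((N:ℝ)*r)) * (((N:ℝ)*r)^N/N.factorial) ≤ (r * Real.exp (1-r))^N := by
  have h1 : ((N:ℝ)*r)^N = (N:ℝ)^N * r^N := mul_pow _ _ _
  have h2 : (N:ℝ)^N ≤ N.factorial * Real.exp N := pow_le_fact_mul_exp N
  have hfac : (0:ℝ) < N.factorial := by positivity
  have h3 : ((N:ℝ)*r)^N/N.factorial ≤ Real.exp N * r^N := by
    rw [h1, div_le_iff₀ hfac]
    calc (N:ℝ)^N * r^N ≤ (N.factorial * Real.exp N) * r^N := by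
          apply mul_le_mul_of_nonneg_right h2 (by positivity)
      _ = Real.exp N * r^N * N.factorial := by ring
  calc Real.exp (-((N:ℝ)*r)) * (((N:ℝ)*r)^N/N.factorial)
      ≤ Real.exp (-((N:ℝ)*r)) * (Real.exp N * r^N) := by
        apply mul_le_mul_of_nonneg_left h3 (Real.exp_pos _).le
    _ = (r * Real.exp (1-r))^N := by
        rw [mul_pow, ← Real.exp_nat_mul,
          show Real.exp (-((N:ℝ)*r)) * (Real.exp (N:ℝ) * r^N)
            = r^N * (Real.exp (-((N:ℝ)*r)) * Real.exp (N:ℝ)) from by ring, ← Real.exp_add]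
        ring_nf

lemma tendsto_S_lt {r : ℝ} (hr0 : 0 ≤ r) (hr1 : r < 1) :
    Tendsto (fun N : ℕ => Real.exp (-((N:ℝ)*r)) * ∑ n ∈ Finset.range N, ((N:ℝ)*r)^n/n.factorial)
      atTop (nhds 1) := by
  set q : ℝ := r * Real.exp (1-r) with hq
  have hq0 : 0 ≤ q := by positivity
  have hq1 : q < 1 := q_lt_one hr0 hr1.ne
  have hub : ∀ N : ℕ, Real.exp (-((N:ℝ)*r)) * ∑ n ∈ Finset.range N, ((N:ℝ)*r)^n/n.factorial ≤ 1 := by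
    intro N
    have h := Real.sum_le_exp_of_nonneg (x := (N:ℝ)*r) (by positivity) N
    calc Real.exp (-((N:ℝ)*r)) * ∑ n ∈ Finset.range N, ((N:ℝ)*r)^n/n.factorial
        ≤ Real.exp (-((N:ℝ)*r)) * Real.exp ((N:ℝ)*r) := by
          apply mul_le_mul_of_nonneg_left h (Real.exp_pos _).le
      _ = 1 := by rw [← Real.exp_add]; simp
  have hlb : ∀ N : ℕ, 1 - q^N * (1-r)⁻¹
      ≤ Real.exp (-((N:ℝ)*r)) * ∑ n ∈ Finset.range N, ((N:ℝ)*r)^n/n.factorial := by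
    intro N
    have h := exp_sub_partial_le hr0 hr1 N
    have hinv : (0:ℝ) ≤ (1-r)⁻¹ := inv_nonneg.mpr (by linarith)
    have h2 : Real.exp (-((N:ℝ)*r)) * (Real.exp ((N:ℝ)*r) - ∑ n ∈ Finset.range N, ((N:ℝ)*r)^n/n.factorial)
        ≤ q^N * (1-r)⁻¹ := by
      calc Real.exp (-((N:ℝ)*r)) * (Real.exp ((N:ℝ)*r) - ∑ n ∈ Finset.range N, ((N:ℝ)*r)^n/n.factorial)
          ≤ Real.exp (-((N:ℝ)*r)) * (((N:ℝ)*r)^N/N.factorial * (1-r)⁻¹) := by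
            apply mul_le_mul_of_nonneg_left h (Real.exp_pos _).le
        _ = Real.exp (-((N:ℝ)*r)) * (((N:ℝ)*r)^N/N.factorial) * (1-r)⁻¹ := by ring
        _ ≤ q^N * (1-r)⁻¹ := mul_le_mul_of_nonneg_right (key_bound hr0 N) hinv
    have h3 : Real.exp (-((N:ℝ)*r)) * Real.exp ((N:ℝ)*r) = 1 := by rw [← Real.exp_add]; simp
    nlinarith [Real.exp_pos (-((N:ℝ)*r))]
  have hg : Tendsto (fun N : ℕ => 1 - q^N * (1-r)⁻¹) atTop (nhds 1) := by
    have := (tendsto_pow_atTop_nhds_zero_of_lt_one hq0 hq1).mul_const (1-r)⁻¹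
    simpa using (tendsto_const_nhds (x := (1:ℝ)) (f := atTop)).sub this
  exact tendsto_of_tendsto_of_tendsto_of_le_of_le hg tendsto_const_nhds hlb hub

lemma term_mono {a : ℝ} {N : ℕ} (hN : 1 ≤ N) (ha : (N:ℝ) ≤ a) :
    ∀ n ∈ Finset.range N, a^n/n.factorial ≤ a^(N-1)/(N-1).factorial := by
  intro n hn
  rw [Finset.mem_range] at hn
  set d : ℕ := N - 1 - n with hd
  have hnd : n + d = N - 1 := by omega
  have ha0 : (0:ℝ) ≤ a := le_trans (by positivity) ha
  have hfac : ((N-1).factorial : ℝ) ≤ (((N-1):ℕ):ℝ)^d * n.factorial := by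
    rw [← hnd]; exact_mod_cast fact_le_pow_mul_fact n d
  have hb : (((N-1):ℕ):ℝ) ≤ a := le_trans (by exact_mod_cast Nat.cast_le.mpr (Nat.sub_le N 1)) ha
  rw [div_le_div_iff₀ (by positivity) (by positivity)]
  calc a^n * ((N-1).factorial:ℝ) ≤ a^n * ((((N-1):ℕ):ℝ)^d * n.factorial) :=
        mul_le_mul_of_nonneg_left hfac (by positivity)
    _ ≤ a^n * (a^d * n.factorial) := by
        apply mul_le_mul_of_nonneg_left _ (by positivity)
        apply mul_le_mul_of_nonneg_right _ (by positivity)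
        exact pow_le_pow_left₀ (by positivity) hb d
    _ = a^(N-1) * n.factorial := by rw [← hnd, pow_add]; ring

lemma S_gt_bound {r : ℝ} (hr : 1 < r) (N : ℕ) (hN : 2 ≤ N) :
    Real.exp (-((N:ℝ)*r)) * ∑ n ∈ Finset.range N, ((N:ℝ)*r)^n/n.factorial
      ≤ ((N:ℝ)/r) * (r * Real.exp (1-r))^N := by
  set M : ℕ := N - 1 with hM
  have hNM : N = M + 1 := by omega
  have hM1 : 1 ≤ M := by omega
  have hr0 : (0:ℝ) < r := lt_trans one_pos hr
  set a : ℝ := (N:ℝ)*r with ha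
  have hNpos : (0:ℝ) < (N:ℝ) := by exact_mod_cast (show 0 < N by omega)
  have haN : (N:ℝ) ≤ a := by nlinarith
  have ha0 : (0:ℝ) ≤ a := le_trans hNpos.le haN
  have hsum : ∑ n ∈ Finset.range N, a^n/n.factorial ≤ (N:ℝ) * (a^M/M.factorial) := by
    have h := Finset.sum_le_card_nsmul (Finset.range N) (fun n => a^n/n.factorial)
      (a^(N-1)/(N-1).factorial) (term_mono (by omega) haN)
    rw [Finset.card_range, nsmul_eq_mul] at h
    simpa [hM] using h
  have hMpos : (0:ℝ) < (M:ℝ) := by exact_mod_cast hM1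
  have hC : a^M / M.factorial ≤ r^M * Real.exp (M+1) := by
    have h1 : ((M:ℝ))^M ≤ M.factorial * Real.exp M := pow_le_fact_mul_exp M
    have hfa : (0:ℝ) < (M.factorial:ℝ) := by positivity
    have hMM : (0:ℝ) < (M:ℝ)^M := by positivity
    have hinv : (1:ℝ)/M.factorial ≤ Real.exp M / (M:ℝ)^M := by
      rw [div_le_div_iff₀ hfa hMM]; nlinarith
    have h2 : a^M / M.factorial ≤ a^M / (M:ℝ)^M * Real.exp M := by
      calc a^M / M.factorial = a^M * (1/M.factorial) := by ring
        _ ≤ a^M * (Real.exp M / (M:ℝ)^M) := mul_le_mul_of_nonneg_left hinv (by positivity)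
        _ = a^M / (M:ℝ)^M * Real.exp M := by ring
    have h3 : a^M / (M:ℝ)^M ≤ r^M * Real.exp 1 := by
      have hdiv : a / (M:ℝ) = r * (1 + 1/(M:ℝ)) := by
        rw [ha, hNM]; push_cast; field_simp
      have h4 : (1 + 1/(M:ℝ))^M ≤ Real.exp 1 := by
        have h5 : (1 + 1/(M:ℝ)) ≤ Real.exp (1/(M:ℝ)) := by
          have := Real.add_one_le_exp (1/(M:ℝ)); linarith
        calc (1 + 1/(M:ℝ))^M ≤ (Real.exp (1/(M:ℝ)))^M :=
              pow_le_pow_left₀ (by positivity) h5 M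
          _ = Real.exp ((M:ℝ) * (1/(M:ℝ))) := by rw [← Real.exp_nat_mul]
          _ = Real.exp 1 := by rw [mul_one_div, div_self hMpos.ne']
      calc a^M / (M:ℝ)^M = (a/(M:ℝ))^M := by rw [div_pow]
        _ = r^M * (1 + 1/(M:ℝ))^M := by rw [hdiv, mul_pow]
        _ ≤ r^M * Real.exp 1 := mul_le_mul_of_nonneg_left h4 (by positivity)
    calc a^M / M.factorial ≤ a^M / (M:ℝ)^M * Real.exp M := h2
      _ ≤ r^M * Real.exp 1 * Real.exp M := mul_le_mul_of_nonneg_right h3 (Real.exp_pos _).le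
      _ = r^M * Real.exp (M+1) := by rw [mul_assoc, ← Real.exp_add]; ring_nf
  have hfinal : Real.exp (-((N:ℝ)*r)) * ((N:ℝ) * (r^M * Real.exp (M+1)))
      = ((N:ℝ)/r) * (r * Real.exp (1-r))^N := by
    have hMN : ((M:ℝ)+1) = (N:ℝ) := by rw [hNM]; push_cast; ring
    rw [mul_pow, ← Real.exp_nat_mul,
      show Real.exp (-((N:ℝ)*r)) * ((N:ℝ) * (r^M * Real.exp ((M:ℝ)+1)))
        = (N:ℝ) * r^M * (Real.exp (-((N:ℝ)*r)) * Real.exp ((M:ℝ)+1)) from by ring,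
      ← Real.exp_add, show -((N:ℝ)*r) + ((M:ℝ)+1) = (N:ℝ)*(1-r) from by rw [hMN]; ring,
      hNM, pow_succ]
    field_simp
  calc Real.exp (-((N:ℝ)*r)) * ∑ n ∈ Finset.range N, a^n/n.factorial
      ≤ Real.exp (-((N:ℝ)*r)) * ((N:ℝ) * (a^M/M.factorial)) :=
        mul_le_mul_of_nonneg_left hsum (Real.exp_pos _).le
    _ ≤ Real.exp (-((N:ℝ)*r)) * ((N:ℝ) * (r^M * Real.exp (M+1))) := by
        apply mul_le_mul_of_nonneg_left _ (Real.exp_pos _).le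
        exact mul_le_mul_of_nonneg_left hC hNpos.le
    _ = ((N:ℝ)/r) * (r * Real.exp (1-r))^N := hfinal

lemma tendsto_S_gt {r : ℝ} (hr : 1 < r) :
    Tendsto (fun N : ℕ => Real.exp (-((N:ℝ)*r)) * ∑ n ∈ Finset.range N, ((N:ℝ)*r)^n/n.factorial)
      atTop (nhds 0) := by
  set q : ℝ := r * Real.exp (1-r) with hq
  have hr0 : (0:ℝ) < r := lt_trans one_pos hr
  have hq0 : 0 ≤ q := by positivity
  have hq1 : q < 1 := q_lt_one hr0.le hr.ne'
  have hbound : Tendsto (fun N : ℕ => ((N:ℝ)/r) * q^N) atTop (nhds 0) := by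
    have hs := (summable_pow_mul_geometric_of_norm_lt_one 1 (r := q)
      (by rwa [Real.norm_eq_abs, abs_of_nonneg hq0])).tendsto_atTop_zero
    have h2 := hs.const_mul (1/r)
    rw [mul_zero] at h2
    refine h2.congr (fun N => ?_)
    simp only [pow_one]
    ring
  apply squeeze_zero'
  · filter_upwards with N
    have : 0 ≤ ∑ n ∈ Finset.range N, ((N:ℝ)*r)^n/n.factorial :=
      Finset.sum_nonneg (fun n _ => by positivity)
    positivity
  · filter_upwards [eventually_ge_atTop 2] with N hN
    exact S_gt_bound hr N hN
  · exact hbound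

lemma log_le_half_sub_inv {v : ℝ} (hv : 1 ≤ v) : Real.log v ≤ (v - v⁻¹)/2 := by
  set g : ℝ → ℝ := fun x => (x - x⁻¹)/2 - Real.log x with hg
  have hderiv : ∀ x : ℝ, 0 < x → HasDerivAt g ((1 + (x^2)⁻¹)/2 - x⁻¹) x := by
    intro x hx
    have h1 : HasDerivAt (fun y : ℝ => (y - y⁻¹)/2) ((1 - -(x^2)⁻¹)/2) x :=
      ((hasDerivAt_id x).sub (hasDerivAt_inv hx.ne')).div_const 2
    have h2 := h1.fun_sub (Real.hasDerivAt_log hx.ne')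
    refine h2.congr_deriv ?_
    ring
  have hmono : MonotoneOn g (Set.Ici 1) := by
    apply monotoneOn_of_deriv_nonneg (convex_Ici 1)
    · intro x hx
      have hx0 : (0:ℝ) < x := lt_of_lt_of_le one_pos hx
      exact (hderiv x hx0).continuousAt.continuousWithinAt
    · intro x hx
      rw [interior_Ici] at hx
      exact (hderiv x (lt_trans one_pos hx)).differentiableAt.differentiableWithinAt
    · intro x hx
      rw [interior_Ici] at hx
      have hx0 : (0:ℝ) < x := lt_trans one_pos hx
      rw [(hderiv x hx0).deriv]
      have : (x^2)⁻¹ = (x⁻¹)^2 := by rw [inv_pow]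
      rw [this]
      nlinarith [sq_nonneg (x⁻¹ - 1)]
  have h0 : g 1 ≤ g v := hmono (by simp) (by simpa using hv) hv
  have hg1 : g 1 = 0 := by simp [hg]
  rw [hg1] at h0
  simp only [hg] at h0
  linarith

lemma log_one_add_le {u : ℝ} (hu : 0 ≤ u) : Real.log (1+u) ≤ u - u^2/(2*(1+u)) := by
  have h1u : (0:ℝ) < 1 + u := by linarith
  have h := log_le_half_sub_inv (v := 1+u) (by linarith)
  have : ((1+u) - (1+u)⁻¹)/2 = u - u^2/(2*(1+u)) := by
    field_simp
    ring
  linarith [h, this.le, this.ge]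

lemma sqrt_nat_tendsto : Tendsto (fun n : ℕ => Real.sqrt n) atTop atTop := by
  apply tendsto_atTop_atTop_of_monotone
  · exact fun a b h => Real.sqrt_le_sqrt (by exact_mod_cast h)
  · intro b
    obtain ⟨n, hn⟩ := exists_nat_ge (b^2)
    refine ⟨n, ?_⟩
    calc b ≤ |b| := le_abs_self b
      _ = Real.sqrt (b^2) := (Real.sqrt_sq_eq_abs b).symm
      _ ≤ Real.sqrt n := Real.sqrt_le_sqrt hn

lemma ptwise {s : ℝ} (hs : 0 < s) :
    Tendsto (fun N : ℕ => (1 + s/Real.sqrt N)^(N-1) * Real.exp (-(Real.sqrt N * s)))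
      atTop (nhds (Real.exp (-(s^2/2)))) := by
  set u : ℕ → ℝ := fun N => s / Real.sqrt N with hu_def
  have hu0 : ∀ N, 0 ≤ u N := fun N => div_nonneg hs.le (Real.sqrt_nonneg _)
  have hu : Tendsto u atTop (nhds 0) := tendsto_const_nhds.div_atTop sqrt_nat_tendsto
  set L : ℕ → ℝ := fun N => Real.log (1 + u N) with hL_def
  set E : ℕ → ℝ := fun N => ((N-1:ℕ):ℝ) * L N - Real.sqrt N * s with hE_def
  have hL : Tendsto L atTop (nhds 0) := by
    have h1 : Tendsto (fun N => 1 + u N) atTop (nhds 1) := by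
      simpa using tendsto_const_nhds.add hu
    have h2 := (Real.continuousAt_log (by norm_num : (1:ℝ) ≠ 0)).tendsto.comp h1
    rw [Real.log_one] at h2; exact h2
  set g : ℕ → ℝ := fun N => s^3/Real.sqrt N * (1 - u N)⁻¹ + |L N| with hg_def
  have hg : Tendsto g atTop (nhds 0) := by
    have h1 : Tendsto (fun N : ℕ => s^3/Real.sqrt N) atTop (nhds 0) :=
      tendsto_const_nhds.div_atTop sqrt_nat_tendsto
    have h2 : Tendsto (fun N => (1 - u N)⁻¹) atTop (nhds 1) := by
      have h3 : Tendsto (fun N => 1 - u N) atTop (nhds 1) := by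
        simpa using tendsto_const_nhds.sub hu
      simpa using h3.inv₀ (by norm_num)
    have h4 := (h1.mul h2).add (hL.abs)
    simpa using h4
  have hEtend : Tendsto E atTop (nhds (-(s^2/2))) := by
    rw [← tendsto_sub_nhds_zero_iff]
    apply squeeze_zero_norm' _ hg
    filter_upwards [eventually_ge_atTop 1,
      hu.eventually_lt_const (show (0:ℝ) < 1/2 by norm_num)] with N hN1 hu2
    have hNpos : (0:ℝ) < N := by exact_mod_cast hN1
    have hsqpos : (0:ℝ) < Real.sqrt N := Real.sqrt_pos.mpr hNpos
    have hsq : Real.sqrt N * Real.sqrt N = (N:ℝ) := Real.mul_self_sqrt hNpos.le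
    have hu1 : u N < 1 := lt_trans hu2 (by norm_num)
    have habs : |(-(u N))| < 1 := by rw [abs_neg, abs_of_nonneg (hu0 N)]; exact hu1
    have key := Real.abs_log_sub_add_sum_range_le habs 2
    have hsum : ∑ i ∈ Finset.range 2, (-(u N))^(i+1)/((i:ℝ)+1) = -(u N) + (u N)^2/2 := by
      norm_num [Finset.sum_range_succ]
    rw [hsum, show (1 - -(u N)) = 1 + u N from by ring, abs_neg, abs_of_nonneg (hu0 N)] at key
    -- key : |(-(u N) + (u N)^2/2 + L N)| ≤ (u N)^3/(1 - u N)
    have hsq2 : Real.sqrt N ^ 2 = (N:ℝ) := Real.sq_sqrt hNpos.le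
    have hdiv : (N:ℝ)/Real.sqrt N = Real.sqrt N := Real.div_sqrt
    have hNu : (N:ℝ) * u N = Real.sqrt N * s := by
      calc (N:ℝ) * (s / Real.sqrt N) = s * ((N:ℝ)/Real.sqrt N) := by ring
        _ = Real.sqrt N * s := by rw [hdiv]; ring
    have hNu2 : (N:ℝ) * (u N)^2 = s^2 := by
      show (N:ℝ) * (s / Real.sqrt N)^2 = s^2
      rw [div_pow, hsq2]
      field_simp
    have hNu3 : (N:ℝ) * (u N)^3 = s^3 / Real.sqrt N := by
      show (N:ℝ) * (s / Real.sqrt N)^3 = s^3 / Real.sqrt N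
      rw [div_pow, show (Real.sqrt N)^3 = (N:ℝ) * Real.sqrt N from by
        rw [pow_succ, hsq2]]
      rw [div_mul_eq_div_div]
      field_simp
    have hcast : ((N-1:ℕ):ℝ) = (N:ℝ) - 1 := by
      rw [Nat.cast_sub hN1]; simp
    have hiden : E N - (-(s^2/2)) = (N:ℝ) * ((-(u N) + (u N)^2/2) + L N) - L N := by
      simp only [hE_def, hcast]
      linear_combination hNu - (1/2) * hNu2
    rw [Real.norm_eq_abs, hiden]
    calc |(N:ℝ) * ((-(u N) + (u N)^2/2) + L N) - L N|
        ≤ |(N:ℝ) * ((-(u N) + (u N)^2/2) + L N)| + |L N| := abs_sub _ _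
      _ = (N:ℝ) * |(-(u N) + (u N)^2/2) + L N| + |L N| := by
          rw [abs_mul, abs_of_nonneg hNpos.le]
      _ ≤ (N:ℝ) * ((u N)^3/(1 - u N)) + |L N| := by
          apply add_le_add_left
          exact mul_le_mul_of_nonneg_left key hNpos.le
      _ = g N := by
          simp only [hg_def]
          congr 1
          rw [show (N:ℝ) * ((u N)^3/(1 - u N)) = ((N:ℝ) * (u N)^3) * (1 - u N)⁻¹ from by ring,
            hNu3]
  have hFeq : (fun N : ℕ => Real.exp (E N)) =ᶠ[atTop]
      (fun N : ℕ => (1 + s/Real.sqrt N)^(N-1) * Real.exp (-(Real.sqrt N * s))) := by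
    filter_upwards [eventually_ge_atTop 1] with N hN1
    have hNpos : (0:ℝ) < N := by exact_mod_cast hN1
    have h1u : (0:ℝ) < 1 + u N := by linarith [hu0 N]
    simp only [hE_def, hL_def, hu_def]
    rw [Real.exp_sub, Real.exp_nat_mul, Real.exp_log (by simpa [hu_def] using h1u),
      Real.exp_neg, div_eq_mul_inv]
  exact ((Real.continuous_exp.tendsto _).comp hEtend).congr' hFeq

lemma dom_bound {s : ℝ} (hs : 0 < s) {N : ℕ} (hN : 2 ≤ N) :
    (1 + s/Real.sqrt N)^(N-1) * Real.exp (-(Real.sqrt N * s))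
      ≤ Real.exp (1/8) * Real.exp (-(1/8 * s)) := by
  have hNpos : (0:ℝ) < N := by exact_mod_cast (show 0 < N by omega)
  have hsqpos : (0:ℝ) < Real.sqrt N := Real.sqrt_pos.mpr hNpos
  have hsq2 : Real.sqrt N ^ 2 = (N:ℝ) := Real.sq_sqrt hNpos.le
  have hsq1 : (1:ℝ) ≤ Real.sqrt N := by
    rw [show (1:ℝ) = Real.sqrt 1 from (Real.sqrt_one).symm]
    exact Real.sqrt_le_sqrt (by exact_mod_cast (show 1 ≤ N by omega))
  set u : ℝ := s / Real.sqrt N with hu_def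
  have hu0 : 0 ≤ u := div_nonneg hs.le hsqpos.le
  have h1u : (0:ℝ) < 1 + u := by linarith
  have hus : u ≤ s := div_le_self hs.le hsq1
  set n1 : ℝ := ((N-1:ℕ):ℝ) with hn1_def
  have hn1 : n1 = (N:ℝ) - 1 := by rw [hn1_def, Nat.cast_sub (by omega)]; simp
  have hNu : (N:ℝ) * u = Real.sqrt N * s := by
    calc (N:ℝ) * (s / Real.sqrt N) = s * ((N:ℝ)/Real.sqrt N) := by ring
      _ = Real.sqrt N * s := by rw [Real.div_sqrt]; ring
  have hNu2 : (N:ℝ) * u^2 = s^2 := by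
    show (N:ℝ) * (s / Real.sqrt N)^2 = s^2
    rw [div_pow, hsq2]
    field_simp
  have hn1u2 : s^2/2 ≤ n1 * u^2 := by
    rw [hn1]
    have : ((N:ℝ) - 1) * u^2 = s^2 - u^2 := by rw [sub_mul, hNu2]; ring
    rw [this]
    have hN2 : (2:ℝ) ≤ N := by exact_mod_cast hN
    have hu2s : u^2 ≤ s^2/2 := by
      have h2 : u^2 = s^2/(N:ℝ) := by rw [← hNu2]; field_simp
      rw [h2]
      exact div_le_div_of_nonneg_left (sq_nonneg s) (by norm_num) hN2
    linarith
  -- rewrite LHS as exp of exponent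
  have hL := log_one_add_le hu0
  have hexp_eq : (1 + u)^(N-1) * Real.exp (-(Real.sqrt N * s))
      = Real.exp (n1 * Real.log (1+u) - Real.sqrt N * s) := by
    rw [Real.exp_sub, Real.exp_neg, hn1_def, Real.exp_nat_mul, Real.exp_log h1u,
      div_eq_mul_inv]
  rw [show (1 + s/Real.sqrt N) = 1 + u from rfl, hexp_eq, ← Real.exp_add]
  apply Real.exp_le_exp.mpr
  -- exponent chain
  have hn1nonneg : 0 ≤ n1 := by
    rw [hn1]
    have hN2 : (2:ℝ) ≤ N := by exact_mod_cast hN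
    linarith
  have step1 : n1 * Real.log (1+u) ≤ n1 * (u - u^2/(2*(1+u))) :=
    mul_le_mul_of_nonneg_left hL hn1nonneg
  have step2 : n1 * u - Real.sqrt N * s = -u := by
    rw [hn1, ← hNu]; ring
  have step3 : (s^2/2)/(2*(1+s)) ≤ (n1 * u^2)/(2*(1+u)) := by
    apply div_le_div₀ (by positivity) hn1u2 (by linarith) (by linarith)
  have step4 : -(s^2/2/(2*(1+s))) ≤ 1/8 + -(1/8 * s) := by
    rw [div_div, neg_le, show -(1/8 + -(1/8*s)) = (s-1)/8 from by ring]
    rw [div_le_div_iff₀ (by norm_num) (by positivity)]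
    nlinarith [sq_nonneg s]
  calc n1 * Real.log (1+u) - Real.sqrt N * s
      ≤ n1 * (u - u^2/(2*(1+u))) - Real.sqrt N * s := by linarith [step1]
    _ = (n1 * u - Real.sqrt N * s) - n1*u^2/(2*(1+u)) := by ring
    _ = -u - (n1*u^2)/(2*(1+u)) := by rw [step2]
    _ ≤ -((s^2/2)/(2*(1+s))) := by linarith [step3]
    _ ≤ 1/8 + -(1/8 * s) := step4

lemma hasDeriv_F (M : ℕ) (t : ℝ) :
    HasDerivAt (fun t : ℝ => -(Real.exp (-t) * ∑ k ∈ Finset.range (M+1), t^k/(k.factorial:ℝ)))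
      (Real.exp (-t) * t^M/(M.factorial:ℝ)) t := by
  have hE : HasDerivAt (fun t : ℝ => Real.exp (-t)) (-Real.exp (-t)) t := by
    have := (hasDerivAt_neg t).exp
    simpa [mul_comm] using this
  have hP : HasDerivAt (fun t : ℝ => ∑ k ∈ Finset.range (M+1), t^k/(k.factorial:ℝ))
      (∑ k ∈ Finset.range M, t^k/(k.factorial:ℝ)) t := by
    have h1 : HasDerivAt (fun t : ℝ => ∑ k ∈ Finset.range (M+1), t^k/(k.factorial:ℝ))
        (∑ k ∈ Finset.range (M+1), ((k:ℝ) * t^(k-1))/(k.factorial:ℝ)) t :=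
      HasDerivAt.fun_sum (fun k _ => (hasDerivAt_pow k t).div_const _)
    convert h1 using 1
    rw [Finset.sum_range_succ' (fun k => ((k:ℝ)*t^(k-1))/(k.factorial:ℝ)) M]
    simp only [Nat.cast_zero, zero_mul, Nat.factorial_zero, Nat.cast_one, zero_div, add_zero]
    apply Finset.sum_congr rfl
    intro k _
    rw [Nat.factorial_succ]
    have hk : ((k:ℝ)+1) ≠ 0 := by positivity
    push_cast
    field_simp
  have h := (hE.fun_mul hP).fun_neg
  refine h.congr_deriv ?_
  rw [Finset.sum_range_succ]
  have hf : (0:ℝ) < (M.factorial:ℝ) := by positivity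
  field_simp
  ring

lemma tendsto_F_zero (M : ℕ) :
    Tendsto (fun t : ℝ => -(Real.exp (-t) * ∑ k ∈ Finset.range (M+1), t^k/(k.factorial:ℝ)))
      atTop (nhds 0) := by
  have h : ∀ t : ℝ, -(Real.exp (-t) * ∑ k ∈ Finset.range (M+1), t^k/(k.factorial:ℝ))
      = -(∑ k ∈ Finset.range (M+1), (t^k * Real.exp (-t))/(k.factorial:ℝ)) := by
    intro t
    rw [Finset.mul_sum]
    congr 1
    apply Finset.sum_congr rfl
    intro k _
    ring
  simp only [h]
  have h2 : Tendsto (fun t : ℝ => ∑ k ∈ Finset.range (M+1), (t^k * Real.exp (-t))/(k.factorial:ℝ))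
      atTop (nhds (∑ k ∈ Finset.range (M+1), (0:ℝ))) := by
    apply tendsto_finset_sum
    intro k _
    simpa using (Real.tendsto_pow_mul_exp_neg_atTop_nhds_zero k).div_const (k.factorial:ℝ)
  have h3 := h2.neg
  simpa using h3

lemma integral_Ioi_eq (M : ℕ) {lam : ℝ} (hlam : 0 < lam) :
    ∫ t in Set.Ioi lam, Real.exp (-t) * t^M/(M.factorial:ℝ)
      = Real.exp (-lam) * ∑ k ∈ Finset.range (M+1), lam^k/(k.factorial:ℝ) := by
  have hint : IntegrableOn (fun t => Real.exp (-t) * t^M/(M.factorial:ℝ)) (Set.Ioi lam) := by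
    have hpos : (0:ℝ) < (M:ℝ)+1 := by positivity
    have base := Real.GammaIntegral_convergent (s := (M:ℝ)+1) hpos
    have base2 : IntegrableOn (fun x => Real.exp (-x) * x ^ ((M:ℝ)+1-1) / (M.factorial:ℝ))
        (Set.Ioi lam) := (base.mono_set (Set.Ioi_subset_Ioi hlam.le)).div_const (M.factorial:ℝ)
    apply MeasureTheory.IntegrableOn.congr_fun base2 _ measurableSet_Ioi
    intro x hx
    have hx0 : (0:ℝ) < x := lt_trans hlam hx
    have h : x ^ ((M:ℝ)+1-1) = x ^ M := by
      rw [show ((M:ℝ)+1-1) = ((M:ℕ):ℝ) by ring, Real.rpow_natCast]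
    simp only [h]
  have key := integral_Ioi_of_hasDerivAt_of_tendsto
    (f := fun t : ℝ => -(Real.exp (-t) * ∑ k ∈ Finset.range (M+1), t^k/(k.factorial:ℝ)))
    (f' := fun t => Real.exp (-t) * t^M/(M.factorial:ℝ)) (a := lam) (m := 0)
    (hasDeriv_F M lam).continuousAt.continuousWithinAt
    (fun x _ => hasDeriv_F M x) hint (tendsto_F_zero M)
  rw [key]
  ring

lemma image_affine (N : ℕ) (hN : 1 ≤ N) :
    (fun s : ℝ => (N:ℝ) + Real.sqrt N * s) '' (Set.Ioi 0) = Set.Ioi (N:ℝ) := by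
  have hs : (0:ℝ) < Real.sqrt N := Real.sqrt_pos.mpr (by exact_mod_cast hN)
  ext x
  simp only [Set.mem_image, Set.mem_Ioi]
  constructor
  · rintro ⟨s, hs0, rfl⟩
    nlinarith
  · intro hx
    refine ⟨(x - N)/Real.sqrt N, div_pos (by linarith) hs, ?_⟩
    field_simp
    ring

lemma change_of_var (N : ℕ) (hN : 1 ≤ N) :
    ∫ t in Set.Ioi (N:ℝ), Real.exp (-t) * t^(N-1) / (((N-1).factorial):ℝ)
      = (Real.sqrt N * (N:ℝ)^(N-1) * Real.exp (-(N:ℝ)) / (((N-1).factorial):ℝ)) *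
        ∫ s in Set.Ioi (0:ℝ), (1 + s/Real.sqrt N)^(N-1) * Real.exp (-(Real.sqrt N * s)) := by
  have hNpos : (0:ℝ) < N := by exact_mod_cast hN
  have hs : (0:ℝ) < Real.sqrt N := Real.sqrt_pos.mpr hNpos
  have hder : ∀ x ∈ Set.Ioi (0:ℝ),
      HasDerivWithinAt (fun s : ℝ => (N:ℝ) + Real.sqrt N * s) (Real.sqrt N) (Set.Ioi 0) x := by
    intro x _
    exact ((hasDerivAt_const x ((N:ℝ))).add ((hasDerivAt_id x).const_mul (Real.sqrt N))).hasDerivWithinAt.congr_deriv (by ring)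
  have hinj : Set.InjOn (fun s : ℝ => (N:ℝ) + Real.sqrt N * s) (Set.Ioi 0) := by
    intro a _ b _ h
    simp only at h
    have := mul_left_cancel₀ hs.ne' (by linarith : Real.sqrt N * a = Real.sqrt N * b)
    exact this
  have key := integral_image_eq_integral_abs_deriv_smul measurableSet_Ioi hder hinj
    (fun t => Real.exp (-t) * t^(N-1) / (((N-1).factorial):ℝ))
  rw [image_affine N hN] at key
  rw [key]
  have heq : ∀ s ∈ Set.Ioi (0:ℝ),
      |Real.sqrt N| • (Real.exp (-((N:ℝ) + Real.sqrt N * s)) * ((N:ℝ) + Real.sqrt N * s)^(N-1) / (((N-1).factorial):ℝ))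
      = (Real.sqrt N * (N:ℝ)^(N-1) * Real.exp (-(N:ℝ)) / (((N-1).factorial):ℝ)) *
        ((1 + s/Real.sqrt N)^(N-1) * Real.exp (-(Real.sqrt N * s))) := by
    intro s _
    rw [abs_of_pos hs, smul_eq_mul]
    have hss : Real.sqrt N * Real.sqrt N = (N:ℝ) := Real.mul_self_sqrt hNpos.le
    have h1 : (N:ℝ) + Real.sqrt N * s = (N:ℝ) * (1 + s/Real.sqrt N) := by
      field_simp
      linear_combination s * hss
    have hexp : Real.exp (-((N:ℝ)*(1 + s/Real.sqrt N)))
        = Real.exp (-(N:ℝ)) * Real.exp (-(Real.sqrt N * s)) := by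
      rw [← Real.exp_add]
      congr 1
      rw [show -(N:ℝ) + -(Real.sqrt N * s) = -((N:ℝ) + Real.sqrt N * s) by ring, ← h1]
    rw [h1, mul_pow, hexp]
    ring
  rw [setIntegral_congr_fun measurableSet_Ioi heq]
  rw [MeasureTheory.integral_const_mul]

lemma J_tendsto :
    Tendsto (fun N : ℕ => ∫ s in Set.Ioi (0:ℝ),
        (1 + s/Real.sqrt N)^(N-1) * Real.exp (-(Real.sqrt N * s)))
      atTop (nhds (∫ s in Set.Ioi (0:ℝ), Real.exp (-(s^2/2)))) := by
  rw [← tendsto_add_atTop_iff_nat 2]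
  apply MeasureTheory.tendsto_integral_of_dominated_convergence
    (bound := fun s => Real.exp (1/8) * Real.exp (-(1/8 * s)))
  · intro n
    apply Continuous.aestronglyMeasurable
    have h1 : Continuous fun s : ℝ => (1 + s/Real.sqrt (n+2:ℕ))^((n+2:ℕ)-1) :=
      (continuous_const.add (continuous_id.div_const _)).pow _
    have h2 : Continuous fun s : ℝ => Real.exp (-(Real.sqrt (n+2:ℕ) * s)) :=
      Real.continuous_exp.comp (continuous_const.mul continuous_id).neg
    exact h1.mul h2
  · have h := exp_neg_integrableOn_Ioi 0 (show (0:ℝ) < 1/8 by norm_num)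
    have h2 : IntegrableOn (fun x => Real.exp (1/8) * Real.exp (-(1/8) * x)) (Set.Ioi 0) :=
      h.const_mul (Real.exp (1/8))
    apply MeasureTheory.IntegrableOn.congr_fun h2 _ measurableSet_Ioi
    intro x _
    simp [neg_mul]
  · intro n
    filter_upwards [ae_restrict_mem measurableSet_Ioi] with sp hsp
    have h0 : (0:ℝ) ≤ 1 + sp/Real.sqrt ((n+2:ℕ):ℝ) :=
      add_nonneg zero_le_one (div_nonneg (le_of_lt hsp) (Real.sqrt_nonneg _))
    rw [Real.norm_eq_abs, abs_of_nonneg (mul_nonneg (pow_nonneg h0 _) (Real.exp_pos _).le)]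
    exact dom_bound hsp (by omega)
  · filter_upwards [ae_restrict_mem measurableSet_Ioi] with sp hsp
    exact (ptwise hsp).comp (tendsto_add_atTop_nat 2)

lemma c_tendsto :
    Tendsto (fun N : ℕ => Real.sqrt N * (N:ℝ)^(N-1) * Real.exp (-(N:ℝ)) / (((N-1).factorial):ℝ))
      atTop (nhds (1/Real.sqrt (2*Real.pi))) := by
  have hpi : (0:ℝ) < Real.pi := Real.pi_pos
  have hsp : (0:ℝ) < Real.sqrt Real.pi := Real.sqrt_pos.mpr hpi
  have h2 : (0:ℝ) < Real.sqrt 2 := Real.sqrt_pos.mpr (by norm_num)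
  have hstir := Stirling.tendsto_stirlingSeq_sqrt_pi
  have hlim : Tendsto (fun N : ℕ => 1/(Real.sqrt 2 * Stirling.stirlingSeq N)) atTop
      (nhds (1/(Real.sqrt 2 * Real.sqrt Real.pi))) := by
    apply Tendsto.div tendsto_const_nhds (tendsto_const_nhds.mul hstir)
    positivity
  have hval : 1/(Real.sqrt 2 * Real.sqrt Real.pi) = 1/Real.sqrt (2*Real.pi) := by
    rw [← Real.sqrt_mul (by norm_num) Real.pi]
  rw [← hval]
  apply hlim.congr'
  filter_upwards [eventually_ge_atTop 1] with N hN1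
  have hNpos : (0:ℝ) < N := by exact_mod_cast hN1
  have hsqN : (0:ℝ) < Real.sqrt N := Real.sqrt_pos.mpr hNpos
  have hF1 : (0:ℝ) < (((N-1).factorial):ℝ) := by positivity
  have h1 : ((N:ℝ)/Real.exp 1)^N = (N:ℝ)^N * Real.exp (-(N:ℝ)) := by
    rw [div_pow, ← Real.exp_nat_mul, mul_one, Real.exp_neg, div_eq_mul_inv]
  have h2N : Real.sqrt (2*(N:ℝ)) = Real.sqrt 2 * Real.sqrt N := Real.sqrt_mul (by norm_num) _
  have h3 : (N.factorial:ℝ) = (N:ℝ) * (((N-1).factorial):ℝ) := by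
    have : N.factorial = N * (N-1).factorial := by
      conv_lhs => rw [show N = (N-1)+1 from by omega]
      rw [Nat.factorial_succ]
      congr 1
      omega
    exact_mod_cast this
  have h4 : (N:ℝ)^N = (N:ℝ)^(N-1) * (N:ℝ) := by
    rw [← pow_succ]
    congr 1
    omega
  have hstir_eq : Stirling.stirlingSeq N
      = (N.factorial:ℝ)/(Real.sqrt (2*N) * ((N:ℝ)/Real.exp 1)^N) := rfl
  rw [hstir_eq, h1, h2N, h3, h4]
  have hexpN : (0:ℝ) < Real.exp (-(N:ℝ)) := Real.exp_pos _
  have hpow : (0:ℝ) < (N:ℝ)^(N-1) := by positivity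
  field_simp

lemma tendsto_S_one :
    Tendsto (fun N : ℕ => Real.exp (-(N:ℝ)) * ∑ n ∈ Finset.range N, (N:ℝ)^n/n.factorial)
      atTop (nhds (1/2)) := by
  have hprod := c_tendsto.mul J_tendsto
  have hval : (1/Real.sqrt (2*Real.pi)) * (∫ s in Set.Ioi (0:ℝ), Real.exp (-(s^2/2))) = 1/2 := by
    have hint : (∫ s in Set.Ioi (0:ℝ), Real.exp (-(s^2/2))) = Real.sqrt (Real.pi/(1/2))/2 := by
      rw [← integral_gaussian_Ioi (1/2)]
      congr 1
      funext s
      congr 1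
      ring
    rw [hint, show Real.pi/(1/2) = 2*Real.pi from by ring]
    have hpos : (0:ℝ) < Real.sqrt (2*Real.pi) := Real.sqrt_pos.mpr (by positivity)
    field_simp
  rw [hval] at hprod
  apply hprod.congr'
  filter_upwards [eventually_ge_atTop 1] with N hN1
  have hNpos : (0:ℝ) < N := by exact_mod_cast hN1
  have hM : N - 1 + 1 = N := by omega
  have h1 := integral_Ioi_eq (N-1) (lam := (N:ℝ)) hNpos
  rw [hM] at h1
  have h2 := change_of_var N hN1
  rw [← h2, h1]

/-- For the potential `V(z) = |z|²/t₀` on `ℂ`, the scaled one-point function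
`(1/N) R_N^{(1)}(z) = (1/(πt₀)) Σ_{n<N} (N/t₀)^n |z|^{2n}/n! · e^{-N|z|²/t₀}`
converges as `N → ∞` to `1/(πt₀)` if `|z|² < t₀`, to `1/(2πt₀)` if `|z|² = t₀`,
and to `0` if `|z|² > t₀`. -/
theorem stmt_5 (t₀ : ℝ) (ht₀ : 0 < t₀) (z : ℂ) (f : ℕ → ℝ)
    (hf : ∀ N : ℕ, f N = 1 / (Real.pi * t₀) * Real.exp (-(N : ℝ) * ‖z‖ ^ 2 / t₀) *
      ∑ n ∈ Finset.range N, ((N : ℝ) / t₀) ^ n * ‖z‖ ^ (2 * n) / n.factorial) :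
    Tendsto f atTop (nhds
      (if ‖z‖ ^ 2 < t₀ then 1 / (Real.pi * t₀)
       else if ‖z‖ ^ 2 = t₀ then 1 / (2 * Real.pi * t₀)
       else 0)) := by
  have hx0 : (0:ℝ) ≤ ‖z‖^2 := sq_nonneg _
  set r : ℝ := ‖z‖^2/t₀ with hr_def
  have hr0 : 0 ≤ r := div_nonneg hx0 ht₀.le
  have hfS : ∀ N : ℕ, f N = 1/(Real.pi*t₀) *
      (Real.exp (-((N:ℝ)*r)) * ∑ n ∈ Finset.range N, ((N:ℝ)*r)^n/n.factorial) := by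
    intro N
    rw [hf N, mul_assoc]
    congr 1
    congr 1
    · congr 1
      rw [hr_def]
      ring
    · apply Finset.sum_congr rfl
      intro n _
      rw [pow_mul, ← mul_pow,
        show (N:ℝ)/t₀ * ‖z‖^2 = (N:ℝ)*r from by rw [hr_def]; ring]
  rcases lt_trichotomy (‖z‖^2) t₀ with hlt | heq | hgt
  · rw [if_pos hlt]
    have hr1 : r < 1 := (div_lt_one ht₀).mpr hlt
    have h := (tendsto_S_lt hr0 hr1).const_mul (1/(Real.pi*t₀))
    rw [mul_one] at h
    exact h.congr (fun N => (hfS N).symm)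
  · rw [if_neg (by rw [heq]; exact lt_irrefl _), if_pos heq]
    have hr1 : r = 1 := by rw [hr_def, heq, div_self ht₀.ne']
    have h := tendsto_S_one.const_mul (1/(Real.pi*t₀))
    rw [show 1/(Real.pi*t₀) * (1/2) = 1/(2*Real.pi*t₀) from by ring] at h
    apply h.congr
    intro N
    rw [hfS N, hr1]
    simp [mul_one]
  · rw [if_neg (by push_neg; linarith), if_neg (by linarith)]
    have hr1 : 1 < r := (one_lt_div ht₀).mpr hgt
    have h := (tendsto_S_gt hr1).const_mul (1/(Real.pi*t₀))
    rw [mul_zero] at h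
    exact h.congr (fun N => (hfS N).symm)
end

section
/- For a positively oriented polynomial curve of degree d encircling the origin, parametrized by h(w) = rw + Σ_{j=0}^d a_j w^{-j}, the exterior harmonic moments t_k = (1/(2πik)) ∮_γ z̄ z^{-k} dz vanish for all k > d+1, and the enclosed area is π t₀ with t₀ = r² − Σ_{j=1}^d j|a_j|². -/
open Complex Metric Finset Filter Topology

private lemma circleIntegral_finset_sum' {ι : Type*} (s : Finset ι) (f : ι → ℂ → ℂ) (c : ℂ) (R : ℝ)
    (h : ∀ i ∈ s, CircleIntegrable (f i) c R) :
    (∮ z in C(c, R), ∑ i ∈ s, f i z) = ∑ i ∈ s, ∮ z in C(c, R), f i z := by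
  simp only [circleIntegral, Finset.smul_sum]
  exact intervalIntegral.integral_finset_sum (fun i hi => (h i hi).out)

private lemma circleIntegral_add' {f g : ℂ → ℂ} {c : ℂ} {R : ℝ}
    (hf : CircleIntegrable f c R) (hg : CircleIntegrable g c R) :
    (∮ z in C(c, R), (f z + g z)) = (∮ z in C(c, R), f z) + ∮ z in C(c, R), g z := by
  simp only [circleIntegral, smul_add]
  exact intervalIntegral.integral_add hf.out hg.out

private lemma circleIntegral_zpow_one (n : ℤ) :
    (∮ z in C((0:ℂ), 1), z ^ n) = if n = -1 then 2 * Real.pi * I else 0 := by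
  split_ifs with hn
  · subst hn
    simpa using circleIntegral.integral_sub_inv_of_mem_ball (mem_ball_self one_pos (x := (0:ℂ)))
  · simpa using circleIntegral.integral_sub_zpow_of_ne hn 0 0 1

private lemma circleIntegral_const_mul (a : ℂ) (f : ℂ → ℂ) (c : ℂ) (R : ℝ) :
    (∮ z in C(c, R), a * f z) = a * ∮ z in C(c, R), f z := by
  simpa [smul_eq_mul] using circleIntegral.integral_smul a f c R

private lemma circleIntegral_monomial (a : ℂ) (n : ℤ) :
    (∮ z in C((0:ℂ), 1), a * z ^ n) = if n = -1 then a * (2 * Real.pi * I) else 0 := by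
  rw [circleIntegral_const_mul, circleIntegral_zpow_one]
  split_ifs <;> simp

private lemma circleIntegrable_of_ne_zero {f : ℂ → ℂ}
    (hf : ∀ z : ℂ, z ≠ 0 → ContinuousAt f z) : CircleIntegrable f 0 1 := by
  refine ContinuousOn.circleIntegrable zero_le_one fun z hz => (hf z ?_).continuousWithinAt
  rw [mem_sphere_zero_iff_norm] at hz
  rintro rfl; simp at hz

private lemma continuousAt_monomial (a : ℂ) (n : ℤ) {z : ℂ} (hz : z ≠ 0) :
    ContinuousAt (fun w : ℂ => a * w ^ n) z :=
  continuousAt_const.mul (continuousAt_zpow₀ z n (Or.inl hz))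

private lemma continuousAt_msum {m : ℕ} (a : Fin m → ℂ) (n : Fin m → ℤ) {z : ℂ} (hz : z ≠ 0) :
    ContinuousAt (fun w : ℂ => ∑ j : Fin m, a j * w ^ (n j)) z :=
  tendsto_finset_sum _ (fun j _ => continuousAt_monomial (a j) (n j) hz)

set_option maxHeartbeats 4000000 in
/-- For a positively oriented polynomial curve of degree `d` encircling the origin,
parametrized by `h(w) = rw + Σ_{j=0}^d a_j w^{-j}`, the exterior harmonic moments
`t_k = (1/(2πik)) ∮_γ z̄ z^{-k} dz` vanish for all `k > d+1`, and the enclosed area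
`(1/(2i)) ∮_γ z̄ dz` equals `π t₀` with `t₀ = r² − Σ_{j=1}^d j|a_j|²`. -/
theorem stmt_8 (d : ℕ) (r : ℝ) (hr : 0 < r) (a : Fin (d + 1) → ℂ)
    (had : a (Fin.last d) ≠ 0)
    (h : ℂ → ℂ)
    (hh : h = fun w : ℂ => (r : ℂ) * w + ∑ j : Fin (d + 1), a j * w ^ (-(j : ℤ)))
    (hinj : Set.InjOn h (Metric.sphere (0 : ℂ) 1))
    (hderiv : ∀ w : ℂ, 1 ≤ ‖w‖ → deriv h w ≠ 0)
    (hne : ∀ w : ℂ, 1 ≤ ‖w‖ → h w ≠ 0) :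
    (∀ k : ℕ, d + 1 < k →
      (2 * Real.pi * I * k)⁻¹ *
        (∮ w in C(0, 1), (starRingEnd ℂ) (h w) * (h w) ^ (-(k : ℤ)) * deriv h w) = 0) ∧
    (2 * I)⁻¹ * (∮ w in C(0, 1), (starRingEnd ℂ) (h w) * deriv h w) =
      ((Real.pi * (r ^ 2 - ∑ j : Fin (d + 1), (j : ℝ) * ‖a j‖ ^ 2) : ℝ) : ℂ) := by
  set c : Fin (d + 1) → ℂ := fun j => (starRingEnd ℂ) (a j) with hcdef
  set e : Fin (d + 1) → ℂ := fun j => -(j : ℤ) * a j with hedef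
  set H : ℂ → ℂ := fun w => (r : ℂ) * w ^ (-1 : ℤ) + ∑ j : Fin (d + 1), c j * w ^ (j : ℤ)
    with hHdef
  set h' : ℂ → ℂ := fun w => (r : ℂ) + ∑ j : Fin (d + 1), e j * w ^ (-(j : ℤ) - 1) with hh'def
  -- derivative of h
  have hD : ∀ w : ℂ, w ≠ 0 → HasDerivAt h (h' w) w := by
    intro w hw
    rw [hh]
    have h1 : HasDerivAt (fun w : ℂ => (r : ℂ) * w) (r : ℂ) w := by
      simpa using (hasDerivAt_id w).const_mul (r : ℂ)
    have h2 : ∀ j : Fin (d + 1), HasDerivAt (fun w : ℂ => a j * w ^ (-(j : ℤ)))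
        (e j * w ^ (-(j : ℤ) - 1)) w := by
      intro j
      have := (hasDerivAt_zpow (-(j : ℤ)) w (Or.inl hw)).const_mul (a j)
      rw [show e j * w ^ (-(j : ℤ) - 1) = a j * (((-(j : ℤ) : ℤ) : ℂ) * w ^ (-(j : ℤ) - 1)) by
        rw [hedef]; push_cast; ring]
      exact this
    simpa [hh'def] using h1.fun_add (HasDerivAt.fun_sum (fun j _ => h2 j))
  have hD' : ∀ w : ℂ, w ≠ 0 → deriv h w = h' w := fun w hw => (hD w hw).deriv
  have hsph0 : ∀ w : ℂ, w ∈ sphere (0 : ℂ) 1 → w ≠ 0 := by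
    intro w hw
    rw [mem_sphere_zero_iff_norm] at hw
    rintro rfl; simp at hw
  -- conjugate on the unit circle
  have hC : ∀ w : ℂ, w ∈ sphere (0 : ℂ) 1 → (starRingEnd ℂ) (h w) = H w := by
    intro w hw
    have hw1 : ‖w‖ = 1 := by rwa [mem_sphere_zero_iff_norm] at hw
    have hinv : w⁻¹ = (starRingEnd ℂ) w := Complex.inv_eq_conj hw1
    rw [hh, hHdef]
    simp only [map_add, map_mul, map_sum, map_zpow₀, Complex.conj_ofReal, ← hinv]
    congr 1
    · rw [zpow_neg_one]
    · refine Finset.sum_congr rfl fun j _ => ?_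
      rw [hcdef]
      simp [inv_zpow, zpow_neg]
  constructor
  · -- vanishing of higher moments
    intro k hk
    set g₁ : ℂ → ℂ := fun w => H w * (h w) ^ (-(k : ℤ)) * h' w with hg₁def
    have hstep : (∮ w in C(0, 1), (starRingEnd ℂ) (h w) * (h w) ^ (-(k : ℤ)) * deriv h w)
        = ∮ w in C(0, 1), g₁ w :=
      circleIntegral.integral_congr zero_le_one fun w hw => by
        simp only [hg₁def]
        rw [hC w hw, hD' w (hsph0 w hw)]
    suffices hzero : (∮ w in C(0, 1), g₁ w) = 0 by rw [hstep, hzero, mul_zero]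
    have hone : ∀ z : ℂ, 1 ≤ ‖z‖ → z ≠ 0 := by
      intro z hz h0; rw [h0] at hz; simp at hz; linarith
    have hdiff : ∀ z : ℂ, 1 ≤ ‖z‖ → DifferentiableAt ℂ g₁ z := by
      intro z hz
      have hz0 : z ≠ 0 := hone z hz
      have hhz : h z ≠ 0 := hne z hz
      have dh : DifferentiableAt ℂ h z := (hD z hz0).differentiableAt
      have dH : DifferentiableAt ℂ H z := by
        rw [hHdef]
        exact ((differentiableAt_const _).mul (differentiableAt_zpow.mpr (Or.inl hz0))).add
          (DifferentiableAt.fun_sum fun j _ =>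
            (differentiableAt_const _).mul (differentiableAt_zpow.mpr (Or.inl hz0)))
      have dh' : DifferentiableAt ℂ h' z := by
        rw [hh'def]
        exact (differentiableAt_const _).add
          (DifferentiableAt.fun_sum fun j _ =>
            (differentiableAt_const _).mul (differentiableAt_zpow.mpr (Or.inl hz0)))
      exact (dH.mul (dh.zpow (Or.inl hhz))).mul dh'
    have hconst : ∀ R : ℝ, 1 ≤ R → (∮ w in C(0, R), g₁ w) = ∮ w in C(0, 1), g₁ w := by
      intro R hR
      refine circleIntegral_eq_of_differentiable_on_annulus_off_countable one_pos hR
        Set.countable_empty ?_ ?_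
      · intro z hz
        have h1 : 1 ≤ ‖z‖ := by
          have := hz.2
          rw [mem_ball, dist_zero_right] at this
          exact not_lt.mp this
        exact (hdiff z h1).continuousAt.continuousWithinAt
      · intro z hz
        have h1 : 1 ≤ ‖z‖ := by
          have := hz.1.2
          rw [mem_closedBall, dist_zero_right] at this
          exact le_of_lt (lt_of_le_of_lt le_rfl (not_le.mp this))
        exact hdiff z h1
    set A : ℝ := ∑ j : Fin (d + 1), ‖a j‖ with hAdef
    set B : ℝ := ∑ j : Fin (d + 1), (j : ℝ) * ‖a j‖ with hBdef
    have hA0 : 0 ≤ A := Finset.sum_nonneg fun j _ => norm_nonneg _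
    have hB0 : 0 ≤ B := Finset.sum_nonneg fun j _ =>
      mul_nonneg (Nat.cast_nonneg _) (norm_nonneg _)
    set K : ℝ := 2 * Real.pi * ((r + A) * (r + B) * (2 / r) ^ k) with hKdef
    have hbound : ∀ R : ℝ, 1 ≤ R → 2 * A / r ≤ R →
        ‖∮ w in C(0, 1), g₁ w‖ ≤ K / R := by
      intro R hR1 hR2
      have hR0 : (0 : ℝ) < R := lt_of_lt_of_le one_pos hR1
      rw [← hconst R hR1]
      have hAle : A ≤ r * R / 2 := by
        rw [div_le_iff₀ hr] at hR2
        linarith [hR2]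
      have hrR : (0 : ℝ) < r * R / 2 := div_pos (mul_pos hr hR0) two_pos
      have hptw : ∀ z ∈ sphere (0 : ℂ) R,
          ‖g₁ z‖ ≤ (r + A) * R ^ d * ((r * R / 2) ^ k)⁻¹ * (r + B) := by
        intro z hzs
        rw [mem_sphere_zero_iff_norm] at hzs
        have hz1 : 1 ≤ ‖z‖ := by rw [hzs]; exact hR1
        have hz0 : z ≠ 0 := hone z hz1
        have hRd1 : (1 : ℝ) ≤ R ^ d := one_le_pow₀ hR1
        have hzpow : ∀ n : ℤ, ‖z ^ n‖ = R ^ n := fun n => by rw [norm_zpow, hzs]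
        -- bound on H
        have nH : ‖H z‖ ≤ (r + A) * R ^ d := by
          rw [hHdef]
          have hb1 : ‖(r : ℂ) * z ^ (-1 : ℤ)‖ ≤ r := by
            rw [norm_mul, hzpow, zpow_neg_one, Complex.norm_real,
              Real.norm_of_nonneg hr.le]
            calc r * R⁻¹ ≤ r * 1 := mul_le_mul_of_nonneg_left (inv_le_one_of_one_le₀ hR1) hr.le
              _ = r := mul_one r
          have hb2 : ‖∑ j : Fin (d + 1), c j * z ^ (j : ℤ)‖ ≤ A * R ^ d := by
            calc ‖∑ j : Fin (d + 1), c j * z ^ (j : ℤ)‖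
                ≤ ∑ j : Fin (d + 1), ‖c j * z ^ (j : ℤ)‖ := norm_sum_le _ _
              _ ≤ ∑ j : Fin (d + 1), ‖a j‖ * R ^ d := by
                  refine Finset.sum_le_sum fun j _ => ?_
                  rw [norm_mul, hzpow, hcdef]
                  simp only [RCLike.norm_conj]
                  refine mul_le_mul_of_nonneg_left ?_ (norm_nonneg _)
                  rw [show ((j : Fin (d+1)) : ℤ) = ((j : ℕ) : ℤ) from rfl, zpow_natCast]
                  exact pow_le_pow_right₀ hR1 (Nat.lt_succ_iff.mp j.isLt)
              _ = A * R ^ d := by rw [hAdef, Finset.sum_mul]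
          calc ‖(r : ℂ) * z ^ (-1 : ℤ) + ∑ j : Fin (d + 1), c j * z ^ (j : ℤ)‖
              ≤ ‖(r : ℂ) * z ^ (-1 : ℤ)‖ + ‖∑ j : Fin (d + 1), c j * z ^ (j : ℤ)‖ :=
                norm_add_le _ _
            _ ≤ r + A * R ^ d := add_le_add hb1 hb2
            _ ≤ r * R ^ d + A * R ^ d := by nlinarith
            _ = (r + A) * R ^ d := by ring
        -- bound on h'
        have nh' : ‖h' z‖ ≤ r + B := by
          rw [hh'def]
          have hb2 : ‖∑ j : Fin (d + 1), e j * z ^ (-(j : ℤ) - 1)‖ ≤ B := by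
            calc ‖∑ j : Fin (d + 1), e j * z ^ (-(j : ℤ) - 1)‖
                ≤ ∑ j : Fin (d + 1), ‖e j * z ^ (-(j : ℤ) - 1)‖ := norm_sum_le _ _
              _ ≤ ∑ j : Fin (d + 1), (j : ℝ) * ‖a j‖ := by
                  refine Finset.sum_le_sum fun j _ => ?_
                  rw [norm_mul, hzpow, hedef]
                  simp only [norm_mul, norm_neg]
                  have he1 : ‖((j : ℤ) : ℂ)‖ = (j : ℝ) := by
                    rw [show (((j : Fin (d+1)) : ℤ) : ℂ) = ((j : ℕ) : ℂ) by push_cast; rfl]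
                    simp
                  have he2 : R ^ (-(j : ℤ) - 1) ≤ 1 := by
                    rw [show (-(j : ℤ) - 1) = -((j : ℤ) + 1) by ring, zpow_neg]
                    refine inv_le_one_of_one_le₀ ?_
                    refine one_le_zpow₀ hR1 (by omega)
                  calc ‖((j : ℤ) : ℂ)‖ * ‖a j‖ * R ^ (-(j : ℤ) - 1)
                      ≤ ‖((j : ℤ) : ℂ)‖ * ‖a j‖ * 1 := by
                        exact mul_le_mul_of_nonneg_left he2
                          (mul_nonneg (norm_nonneg _) (norm_nonneg _))
                    _ = (j : ℝ) * ‖a j‖ := by rw [mul_one, he1]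
              _ = B := hBdef.symm
          calc ‖(r : ℂ) + ∑ j : Fin (d + 1), e j * z ^ (-(j : ℤ) - 1)‖
              ≤ ‖(r : ℂ)‖ + ‖∑ j : Fin (d + 1), e j * z ^ (-(j : ℤ) - 1)‖ := norm_add_le _ _
            _ ≤ r + B := by
                rw [Complex.norm_real, Real.norm_of_nonneg hr.le]
                exact add_le_add_right hb2 r
        -- lower bound on h
        have nh : r * R / 2 ≤ ‖h z‖ := by
          have hsum : ‖∑ j : Fin (d + 1), a j * z ^ (-(j : ℤ))‖ ≤ A := by
            calc ‖∑ j : Fin (d + 1), a j * z ^ (-(j : ℤ))‖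
                ≤ ∑ j : Fin (d + 1), ‖a j * z ^ (-(j : ℤ))‖ := norm_sum_le _ _
              _ ≤ ∑ j : Fin (d + 1), ‖a j‖ := by
                  refine Finset.sum_le_sum fun j _ => ?_
                  rw [norm_mul, hzpow]
                  have : R ^ (-(j : ℤ)) ≤ 1 := by
                    rw [zpow_neg]
                    refine inv_le_one_of_one_le₀ (one_le_zpow₀ hR1 (by omega))
                  calc ‖a j‖ * R ^ (-(j : ℤ)) ≤ ‖a j‖ * 1 :=
                        mul_le_mul_of_nonneg_left this (norm_nonneg _)
                    _ = ‖a j‖ := mul_one _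
              _ = A := hAdef.symm
          have hhz : h z = (r : ℂ) * z + ∑ j : Fin (d + 1), a j * z ^ (-(j : ℤ)) := by
            rw [hh]
          have : r * R ≤ ‖h z‖ + A := by
            have h1 : ‖(r : ℂ) * z‖ = r * R := by
              rw [norm_mul, Complex.norm_real, Real.norm_of_nonneg hr.le, hzs]
            have h2 : ‖(r : ℂ) * z‖ ≤ ‖h z‖ + ‖∑ j : Fin (d + 1), a j * z ^ (-(j : ℤ))‖ := by
              have : (r : ℂ) * z = h z - ∑ j : Fin (d + 1), a j * z ^ (-(j : ℤ)) := by
                rw [hhz]; ring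
              rw [this]
              exact norm_sub_le _ _
            linarith [le_trans h2 (add_le_add_right hsum _)]
          linarith
        -- combine
        have npow : ‖(h z) ^ (-(k : ℤ))‖ ≤ ((r * R / 2) ^ k)⁻¹ := by
          rw [norm_zpow, show (-(k : ℤ)) = -((k : ℕ) : ℤ) from rfl, zpow_neg, zpow_natCast]
          exact inv_anti₀ (pow_pos hrR k) (pow_le_pow_left₀ hrR.le nh k)
        have hg₁z : ‖g₁ z‖ = ‖H z‖ * ‖(h z) ^ (-(k : ℤ))‖ * ‖h' z‖ := by
          rw [hg₁def]; simp [norm_mul]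
        rw [hg₁z]
        have h1 : (0:ℝ) ≤ ‖H z‖ := norm_nonneg _
        have h2 : (0:ℝ) ≤ ‖(h z) ^ (-(k : ℤ))‖ := norm_nonneg _
        have h3 : (0:ℝ) ≤ ‖h' z‖ := norm_nonneg _
        have h4 : (0:ℝ) ≤ (r + A) * R ^ d :=
          mul_nonneg (by linarith) (pow_nonneg hR0.le d)
        have h5 : (0:ℝ) ≤ ((r * R / 2) ^ k)⁻¹ := inv_nonneg.mpr (pow_pos hrR k).le
        exact mul_le_mul (mul_le_mul nH npow h2 h4) nh' h3 (mul_nonneg h4 h5)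
      have hnormle := circleIntegral.norm_integral_le_of_norm_le_const hR0.le hptw
      refine le_trans hnormle ?_
      have hexp : 2 * Real.pi * R * ((r + A) * R ^ d * ((r * R / 2) ^ k)⁻¹ * (r + B))
          = K * (R ^ (d + 1) / R ^ k) := by
        rw [hKdef]
        have : (r * R / 2) ^ k = (r / 2) ^ k * R ^ k := by
          rw [← mul_pow]; ring_nf
        rw [this]
        have hr2 : ((r / 2) ^ k)⁻¹ = (2 / r) ^ k := by
          rw [← inv_pow, inv_div]
        rw [mul_inv, hr2]
        ring
      rw [hexp]
      have hfrac : R ^ (d + 1) / R ^ k ≤ 1 / R := by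
        rw [div_le_div_iff₀ (pow_pos hR0 k) hR0]
        calc R ^ (d + 1) * R = R ^ (d + 2) := by ring
          _ ≤ R ^ k := pow_le_pow_right₀ hR1 (by omega)
          _ = 1 * R ^ k := (one_mul _).symm
      have hK0 : (0 : ℝ) ≤ K := by
        rw [hKdef]
        exact mul_nonneg (mul_nonneg (by norm_num) Real.pi_pos.le)
          (mul_nonneg (mul_nonneg (by linarith) (by linarith))
            (pow_nonneg (div_nonneg (by norm_num) hr.le) k))
      calc K * (R ^ (d + 1) / R ^ k) ≤ K * (1 / R) :=
            mul_le_mul_of_nonneg_left hfrac hK0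
        _ = K / R := by ring
    have hlim : Tendsto (fun R : ℝ => K / R) atTop (𝓝 0) := by
      simpa [div_eq_mul_inv] using tendsto_inv_atTop_zero.const_mul K
    have hM : ‖∮ w in C(0, 1), g₁ w‖ ≤ 0 := by
      refine ge_of_tendsto hlim ?_
      filter_upwards [eventually_ge_atTop (max 1 (2 * A / r))] with R hR
      exact hbound R (le_trans (le_max_left _ _) hR) (le_trans (le_max_right _ _) hR)
    exact norm_le_zero_iff.mp hM
  · -- area computation
    have hcongr : (∮ w in C(0, 1), (starRingEnd ℂ) (h w) * deriv h w)
        = ∮ w in C(0, 1), ((r : ℂ) ^ 2 * w ^ (-1 : ℤ)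
            + ((∑ l : Fin (d + 1), ((r : ℂ) * e l) * w ^ (-(l : ℤ) - 2))
            + ((∑ j : Fin (d + 1), (c j * (r : ℂ)) * w ^ (j : ℤ))
            + ∑ j : Fin (d + 1), ∑ l : Fin (d + 1),
                (c j * e l) * w ^ ((j : ℤ) - (l : ℤ) - 1)))) := by
      refine circleIntegral.integral_congr zero_le_one fun w hw => ?_
      have hw0 := hsph0 w hw
      rw [hC w hw, hD' w hw0, hHdef, hh'def]
      simp only []
      have e2 : (r : ℂ) * w ^ (-1 : ℤ) * (∑ l : Fin (d + 1), e l * w ^ (-(l : ℤ) - 1))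
          = ∑ l : Fin (d + 1), ((r : ℂ) * e l) * w ^ (-(l : ℤ) - 2) := by
        rw [Finset.mul_sum]
        refine Finset.sum_congr rfl fun l _ => ?_
        rw [show (-(l : ℤ) - 2) = (-1) + (-(l : ℤ) - 1) by ring, zpow_add₀ hw0]; ring
      have e3 : (∑ j : Fin (d + 1), c j * w ^ (j : ℤ)) * (r : ℂ)
          = ∑ j : Fin (d + 1), (c j * (r : ℂ)) * w ^ (j : ℤ) := by
        rw [Finset.sum_mul]; exact Finset.sum_congr rfl fun j _ => by ring
      have e4 : (∑ j : Fin (d + 1), c j * w ^ (j : ℤ))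
            * (∑ l : Fin (d + 1), e l * w ^ (-(l : ℤ) - 1))
          = ∑ j : Fin (d + 1), ∑ l : Fin (d + 1),
              (c j * e l) * w ^ ((j : ℤ) - (l : ℤ) - 1) := by
        rw [Finset.sum_mul]
        refine Finset.sum_congr rfl fun j _ => ?_
        rw [Finset.mul_sum]
        refine Finset.sum_congr rfl fun l _ => ?_
        rw [show ((j : ℤ) - (l : ℤ) - 1) = (j : ℤ) + (-(l : ℤ) - 1) by ring, zpow_add₀ hw0]
        ring
      rw [add_mul, mul_add, mul_add, e2, e3, e4]; ring
    have int1 : CircleIntegrable (fun w : ℂ => (r : ℂ) ^ 2 * w ^ (-1 : ℤ)) 0 1 :=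
      circleIntegrable_of_ne_zero fun z hz => continuousAt_monomial _ _ hz
    have int2 : CircleIntegrable
        (fun w : ℂ => ∑ l : Fin (d + 1), ((r : ℂ) * e l) * w ^ (-(l : ℤ) - 2)) 0 1 :=
      circleIntegrable_of_ne_zero fun z hz => continuousAt_msum _ _ hz
    have int3 : CircleIntegrable
        (fun w : ℂ => ∑ j : Fin (d + 1), (c j * (r : ℂ)) * w ^ (j : ℤ)) 0 1 :=
      circleIntegrable_of_ne_zero fun z hz => continuousAt_msum _ _ hz
    have int4 : CircleIntegrable (fun w : ℂ => ∑ j : Fin (d + 1), ∑ l : Fin (d + 1),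
        (c j * e l) * w ^ ((j : ℤ) - (l : ℤ) - 1)) 0 1 :=
      circleIntegrable_of_ne_zero fun z hz =>
        tendsto_finset_sum _ fun j _ => continuousAt_msum _ _ hz
    have int34 : CircleIntegrable (fun w : ℂ =>
        (∑ j : Fin (d + 1), (c j * (r : ℂ)) * w ^ (j : ℤ))
          + ∑ j : Fin (d + 1), ∑ l : Fin (d + 1),
              (c j * e l) * w ^ ((j : ℤ) - (l : ℤ) - 1)) 0 1 := int3.add int4
    have int234 : CircleIntegrable (fun w : ℂ =>
        (∑ l : Fin (d + 1), ((r : ℂ) * e l) * w ^ (-(l : ℤ) - 2))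
          + ((∑ j : Fin (d + 1), (c j * (r : ℂ)) * w ^ (j : ℤ))
          + ∑ j : Fin (d + 1), ∑ l : Fin (d + 1),
              (c j * e l) * w ^ ((j : ℤ) - (l : ℤ) - 1))) 0 1 := int2.add int34
    rw [hcongr, circleIntegral_add' int1 int234,
      circleIntegral_add' int2 int34, circleIntegral_add' int3 int4]
    have v1 : (∮ z in C((0:ℂ), 1), (r : ℂ) ^ 2 * z ^ (-1 : ℤ))
        = (r : ℂ) ^ 2 * (2 * Real.pi * I) := by
      rw [circleIntegral_monomial, if_pos rfl]
    have v2 : (∮ z in C((0:ℂ), 1),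
        ∑ l : Fin (d + 1), ((r : ℂ) * e l) * z ^ (-(l : ℤ) - 2)) = 0 := by
      rw [circleIntegral_finset_sum' _ _ _ _ (fun i _ =>
        circleIntegrable_of_ne_zero fun z hz => continuousAt_monomial _ _ hz)]
      refine Finset.sum_eq_zero fun l _ => ?_
      rw [circleIntegral_monomial, if_neg (by omega)]
    have v3 : (∮ z in C((0:ℂ), 1),
        ∑ j : Fin (d + 1), (c j * (r : ℂ)) * z ^ (j : ℤ)) = 0 := by
      rw [circleIntegral_finset_sum' _ _ _ _ (fun i _ =>
        circleIntegrable_of_ne_zero fun z hz => continuousAt_monomial _ _ hz)]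
      refine Finset.sum_eq_zero fun j _ => ?_
      rw [circleIntegral_monomial, if_neg (by omega)]
    have v4 : (∮ z in C((0:ℂ), 1), ∑ j : Fin (d + 1), ∑ l : Fin (d + 1),
        (c j * e l) * z ^ ((j : ℤ) - (l : ℤ) - 1))
        = ∑ j : Fin (d + 1), c j * e j * (2 * Real.pi * I) := by
      rw [circleIntegral_finset_sum' _ _ _ _ (fun i _ =>
        circleIntegrable_of_ne_zero fun z hz => continuousAt_msum _ _ hz)]
      refine Finset.sum_congr rfl fun j _ => ?_
      rw [circleIntegral_finset_sum' _ _ _ _ (fun i _ =>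
        circleIntegrable_of_ne_zero fun z hz => continuousAt_monomial _ _ hz)]
      have : ∀ l : Fin (d + 1), (∮ z in C((0:ℂ), 1),
          (c j * e l) * z ^ ((j : ℤ) - (l : ℤ) - 1))
          = if l = j then c j * e j * (2 * Real.pi * I) else 0 := by
        intro l
        rw [circleIntegral_monomial]
        by_cases hlj : l = j
        · subst hlj; rw [if_pos (by ring), if_pos rfl]
        · rw [if_neg, if_neg hlj]
          intro hc
          exact hlj (Fin.ext (by omega))
      simp only [this]
      rw [Finset.sum_ite_eq' Finset.univ j
        (fun _ => c j * e j * (2 * Real.pi * I)), if_pos (Finset.mem_univ j)]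
    rw [v1, v2, v3, v4]
    have hce : ∀ j : Fin (d + 1), c j * e j = -((j : ℕ) : ℂ) * ((‖a j‖ : ℝ) : ℂ) ^ 2 := by
      intro j
      have hconj : (starRingEnd ℂ) (a j) * a j = ((‖a j‖ : ℝ) : ℂ) ^ 2 := by
        rw [mul_comm, Complex.mul_conj, Complex.normSq_eq_norm_sq]
        push_cast; ring
      rw [hcdef, hedef]
      simp only []
      push_cast
      calc (starRingEnd ℂ) (a j) * (-((j : ℕ) : ℂ) * a j)
          = -((j : ℕ) : ℂ) * ((starRingEnd ℂ) (a j) * a j) := by ring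
        _ = -((j : ℕ) : ℂ) * ((‖a j‖ : ℝ) : ℂ) ^ 2 := by rw [hconj]
    simp only [hce]
    rw [inv_mul_eq_iff_eq_mul₀ (by simp [Complex.I_ne_zero] : (2 * I : ℂ) ≠ 0)]
    push_cast [Complex.ofReal_sum]
    simp only [neg_mul]
    rw [Finset.sum_neg_distrib, ← Finset.sum_mul]
    ring
end

section
/- For every α ∈ [0,1], the function f(x) = (x−1)(1 + α/x) − (1+α) log x is non-negative on [1, ∞). -/
private lemma stmt_17_hasDeriv (α y : ℝ) (hy : 0 < y) :
    HasDerivAt (fun x : ℝ => (x - 1) * (1 + α / x) - (1 + α) * Real.log x)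
      (1 * (1 + α / y) + (y - 1) * (α * (-(y ^ 2)⁻¹)) - (1 + α) * y⁻¹) y := by
  have h1 : HasDerivAt (fun x : ℝ => x - 1) 1 y := (hasDerivAt_id y).sub_const 1
  have h2 : HasDerivAt (fun x : ℝ => 1 + α / x) (α * (-(y ^ 2)⁻¹)) y := by
    have := ((hasDerivAt_inv hy.ne').const_mul α).const_add 1
    simpa [div_eq_mul_inv, mul_comm] using this
  exact (h1.mul h2).sub ((Real.hasDerivAt_log hy.ne').const_mul (1 + α))

/-- For every `α ∈ [0,1]`, the function `f(x) = (x-1)(1 + α/x) - (1+α) log x`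
is non-negative on `[1, ∞)`. -/
theorem stmt_17 (α : ℝ) (hα : α ∈ Set.Icc (0 : ℝ) 1) (x : ℝ) (hx : 1 ≤ x) :
    0 ≤ (x - 1) * (1 + α / x) - (1 + α) * Real.log x := by
  obtain ⟨hα0, hα1⟩ := hα
  set f : ℝ → ℝ := fun x => (x - 1) * (1 + α / x) - (1 + α) * Real.log x with hf
  have hmono : MonotoneOn f (Set.Ici 1) := by
    apply monotoneOn_of_deriv_nonneg (convex_Ici 1)
    · intro y hy
      have hy0 : (0:ℝ) < y := lt_of_lt_of_le one_pos hy
      exact (stmt_17_hasDeriv α y hy0).continuousAt.continuousWithinAt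
    · intro y hy
      rw [interior_Ici] at hy
      have hy0 : (0:ℝ) < y := lt_trans one_pos hy
      exact (stmt_17_hasDeriv α y hy0).differentiableAt.differentiableWithinAt
    · intro y hy
      rw [interior_Ici] at hy
      have hy0 : (0:ℝ) < y := lt_trans one_pos hy
      rw [(stmt_17_hasDeriv α y hy0).deriv]
      have key : 1 * (1 + α / y) + (y - 1) * (α * (-(y ^ 2)⁻¹)) - (1 + α) * y⁻¹
          = (y - 1) * (y - α) / y ^ 2 := by
        field_simp
        ring
      rw [key]
      apply div_nonneg _ (sq_nonneg y)
      have : α ≤ y := le_trans hα1 hy.le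
      have h1y : 1 < y := hy
      nlinarith
  have h1 : f 1 = 0 := by simp [hf]
  have := hmono (Set.self_mem_Ici) (Set.mem_Ici.mpr hx) hx
  rw [h1] at this
  exact this
end

section
/- Let (q_n)_{n≥0} be real polynomials with deg q_n = n, q₀ > 0, satisfying z q_n(z) = r_{n+1} q_{n+1}(z) + a_{n-d} q_{n-d}(z) for some d ∈ ℕ and positive reals r_n, a_n (with q_m = 0 for m < 0). Then each q_{j(d+1)+r} (0 ≤ r ≤ d) has the form z^r q̃(z^{d+1}) for a unique real polynomial q̃ of degree j, and q̃ has exactly j distinct, real, positive roots. -/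
open Polynomial
noncomputable section
namespace Stmt19


/-- number of elements of `s` greater than `t` -/
def NGT (s : Finset ℝ) (t : ℝ) : ℕ := (s.filter (fun x => t < x)).card

lemma neg_one_sq_pow (N : ℕ) : ((-1:ℝ)^N) * ((-1:ℝ)^N) = 1 := by
  rw [← pow_add]; exact Even.neg_one_pow ⟨N, rfl⟩

lemma factor (F : Polynomial ℝ) (s : Finset ℝ) (hc : s.card = F.natDegree)
    (hroot : ∀ x ∈ s, F.eval x = 0) (hF : F ≠ 0) :
    F = C F.leadingCoeff * ∏ x ∈ s, (X - C x) := by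
  classical
  have hle : s.val ≤ F.roots := by
    rw [Multiset.le_iff_count]
    intro x
    by_cases hx : x ∈ s
    · have h1 : s.val.count x = 1 := Multiset.count_eq_one_of_mem s.nodup hx
      rw [h1, Polynomial.count_roots]
      exact (Polynomial.rootMultiplicity_pos hF).2 (hroot x hx)
    · simp [Multiset.count_eq_zero_of_notMem hx]
  have hdvd : (∏ x ∈ s, (X - C x)) ∣ F := by
    rw [Finset.prod_eq_multiset_prod]
    exact dvd_trans (Multiset.prod_dvd_prod_of_le (Multiset.map_le_map hle))
      (Polynomial.prod_multiset_X_sub_C_dvd F)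
  obtain ⟨g, hg⟩ := hdvd
  have hmon : (∏ x ∈ s, (X - C x)).Monic :=
    Polynomial.monic_prod_of_monic _ _ (fun x _ => Polynomial.monic_X_sub_C x)
  have hprodne : (∏ x ∈ s, (X - C x)) ≠ 0 := hmon.ne_zero
  have hgne : g ≠ 0 := by rintro rfl; rw [mul_zero] at hg; exact hF hg
  have hdegp : (∏ x ∈ s, (X - C x)).natDegree = s.card := by
    rw [Polynomial.natDegree_prod _ _ (fun x _ => Polynomial.X_sub_C_ne_zero x)]
    simp
  have hdegg : g.natDegree = 0 := by
    have := Polynomial.natDegree_mul hprodne hgne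
    rw [← hg, hdegp] at this
    omega
  have hgC : g = C (g.coeff 0) := Polynomial.eq_C_of_natDegree_eq_zero hdegg
  have hlcg : F.leadingCoeff = g.coeff 0 := by
    have := Polynomial.leadingCoeff_mul (∏ x ∈ s, (X - C x)) g
    rw [← hg, hmon.leadingCoeff, one_mul] at this
    rw [this, hgC]; simp [Polynomial.leadingCoeff]
  rw [hlcg]
  conv_lhs => rw [hg, hgC]
  exact mul_comm _ _

lemma eval_factor (F : Polynomial ℝ) (s : Finset ℝ) (hc : s.card = F.natDegree)
    (hroot : ∀ x ∈ s, F.eval x = 0) (hF : F ≠ 0) (t : ℝ) :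
    F.eval t = F.leadingCoeff * ∏ x ∈ s, (t - x) := by
  conv_lhs => rw [factor F s hc hroot hF]
  simp [Polynomial.eval_prod]

/-- membership characterization of roots for a fully-split poly -/
lemma roots_eq (F : Polynomial ℝ) (s : Finset ℝ) (hc : s.card = F.natDegree)
    (hroot : ∀ x ∈ s, F.eval x = 0) (hlc : F.leadingCoeff ≠ 0) (x : ℝ) :
    F.eval x = 0 ↔ x ∈ s := by
  have hF : F ≠ 0 := fun h => by simp [h] at hlc
  rw [eval_factor F s hc hroot hF]
  constructor
  · intro h
    rcases mul_eq_zero.1 h with h | h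
    · exact absurd h hlc
    · obtain ⟨y, hy, hy0⟩ := Finset.prod_eq_zero_iff.1 h
      have : x = y := by linarith [sub_eq_zero.1 hy0]
      rwa [this]
  · intro hx
    rw [Finset.prod_eq_zero hx (by simp), mul_zero]

lemma sign_eval (F : Polynomial ℝ) (s : Finset ℝ) (hc : s.card = F.natDegree)
    (hroot : ∀ x ∈ s, F.eval x = 0) (hlc : 0 < F.leadingCoeff) (t : ℝ) (ht : t ∉ s) :
    0 < (-1 : ℝ) ^ (NGT s t) * F.eval t := by
  classical
  have hF : F ≠ 0 := Polynomial.leadingCoeff_ne_zero.1 hlc.ne'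
  rw [eval_factor F s hc hroot hF t]
  rw [← Finset.prod_filter_mul_prod_filter_not s (fun x => t < x) (fun x => t - x)]
  have h1 : (∏ x ∈ s.filter (fun x => t < x), (t - x)) =
      (-1:ℝ)^(NGT s t) * ∏ x ∈ s.filter (fun x => t < x), (x - t) := by
    rw [NGT, ← Finset.prod_const, ← Finset.prod_mul_distrib]
    exact Finset.prod_congr rfl (fun x _ => by ring)
  have h2 : 0 < ∏ x ∈ s.filter (fun x => t < x), (x - t) :=
    Finset.prod_pos (fun x hx => by
      have := (Finset.mem_filter.1 hx).2; linarith)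
  have h3 : 0 < ∏ x ∈ s.filter (fun x => ¬ t < x), (t - x) :=
    Finset.prod_pos (fun x hx => by
      have h4 := (Finset.mem_filter.1 hx).2
      have h5 : x ≠ t := by rintro rfl; exact ht (Finset.mem_filter.1 hx).1
      have : x < t := lt_of_le_of_ne (not_lt.1 h4) h5
      linarith)
  rw [h1]
  have := neg_one_sq_pow (NGT s t)
  nlinarith [mul_pos (mul_pos hlc h2) h3]

lemma exists_root_gt (G : Polynomial ℝ) (hlc : 0 < G.leadingCoeff) (hdeg : 0 < G.natDegree)
    (t0 : ℝ) (hneg : G.eval t0 < 0) : ∃ z, t0 < z ∧ G.eval z = 0 := by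
  have htend := Polynomial.tendsto_atTop_of_leadingCoeff_nonneg G
    (Polynomial.natDegree_pos_iff_degree_pos.1 hdeg) hlc.le
  have hev : ∀ᶠ x in Filter.atTop, 0 < Polynomial.eval x G := htend.eventually_gt_atTop 0
  obtain ⟨T, hT1, hT2⟩ := (hev.and (Filter.eventually_gt_atTop t0)).exists
  have hcont : ContinuousOn (fun x => Polynomial.eval x G) (Set.Icc t0 T) :=
    (Polynomial.continuous G).continuousOn
  have hmem : (0:ℝ) ∈ Set.Icc (Polynomial.eval t0 G) (Polynomial.eval T G) := ⟨hneg.le, hT1.le⟩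
  obtain ⟨z, hz, hz0⟩ := intermediate_value_Icc hT2.le hcont hmem
  refine ⟨z, lt_of_le_of_ne hz.1 ?_, hz0⟩
  rintro rfl
  exact absurd (by simpa using hz0 : Polynomial.eval t0 G = 0) hneg.ne



lemma NGT_insert_of_lt {t : Finset ℝ} {b y : ℝ} (hb : b ∉ t) (h : y < b) :
    NGT (insert b t) y = NGT t y + 1 := by
  rw [NGT, Finset.filter_insert, if_pos h, NGT,
    Finset.card_insert_of_notMem (fun hm => hb (Finset.mem_filter.1 hm).1)]

lemma NGT_insert_of_ge {t : Finset ℝ} {b y : ℝ} (h : ¬ y < b) :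
    NGT (insert b t) y = NGT t y := by rw [NGT, Finset.filter_insert, if_neg h, NGT]

lemma NGT_eq_zero_iff {t : Finset ℝ} {y : ℝ} : NGT t y = 0 ↔ ∀ x ∈ t, ¬ y < x := by
  rw [NGT, Finset.card_eq_zero, Finset.filter_eq_empty_iff]

lemma NGT_pos {t : Finset ℝ} {y x : ℝ} (hx : x ∈ t) (h : y < x) : 0 < NGT t y :=
  Finset.card_pos.2 ⟨x, Finset.mem_filter.2 ⟨hx, h⟩⟩






lemma core : ∀ (k : ℕ) (s : Finset ℝ), s.card = k → (∀ x ∈ s, 0 < x) →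
    ∀ (G : Polynomial ℝ) (M : ℕ), G.natDegree = M → (M = k ∨ M = k + 1) → 0 < G.leadingCoeff →
    (∀ y ∈ s, 0 < (-1:ℝ)^(NGT s y + 1) * G.eval y) → (0 < (-1:ℝ)^M * G.eval 0) →
    ∃ u : Finset ℝ, u.card = M ∧ (∀ x ∈ u, 0 < x) ∧ (∀ x ∈ u, G.eval x = 0) ∧
      (∀ y ∈ s, NGT u y = NGT s y + 1) ∧ (∀ z ∈ u, NGT s z = NGT u z) := by
  intro k
  induction k with
  | zero =>
    intro s hcard hpos G M hdeg hM hlc hsign h0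
    have hs : s = ∅ := Finset.card_eq_zero.1 hcard
    subst hs
    rcases hM with hM | hM
    · refine ⟨∅, by simp [hM], by simp, by simp, by simp, by simp⟩
    · have hM1 : M = 1 := by omega
      have hneg : G.eval 0 < 0 := by
        have h1 := h0; rw [hM1, pow_one] at h1; linarith
      obtain ⟨z, hz0, hzroot⟩ := exists_root_gt G hlc (by omega) 0 hneg
      refine ⟨{z}, by simp [hM1], by simpa using hz0, by simpa using hzroot, by simp, ?_⟩
      intro w hw
      rcases Finset.mem_singleton.1 hw with rfl
      simp [NGT, Finset.filter_singleton]
  | succ k ih =>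
    intro s hcard hpos G M hdeg hM hlc hsign h0
    have hne : s.Nonempty := Finset.card_pos.1 (by omega)
    set y0 := s.max' hne with hy0def
    have hy0mem : y0 ∈ s := s.max'_mem hne
    have hy0pos : 0 < y0 := hpos _ hy0mem
    have hNGTy0 : NGT s y0 = 0 :=
      NGT_eq_zero_iff.2 (fun x hx => not_lt.2 (s.le_max' x hx))
    have hGy0neg : G.eval y0 < 0 := by
      have h1 := hsign y0 hy0mem
      rw [hNGTy0, zero_add, pow_one] at h1
      linarith
    have hdegpos : 0 < G.natDegree := by omega
    obtain ⟨z, hzy0, hzroot⟩ := exists_root_gt G hlc hdegpos y0 hGy0neg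
    have hzpos : 0 < z := hy0pos.trans hzy0
    set G' := G / (X - C z) with hG'def
    have hfact : (X - C z) * G' = G := Polynomial.mul_div_eq_iff_isRoot.2 hzroot
    have hGne : G ≠ 0 := Polynomial.leadingCoeff_ne_zero.1 hlc.ne'
    have hG'ne : G' ≠ 0 := by
      intro h; rw [h, mul_zero] at hfact; exact hGne hfact.symm
    have hdegG' : G'.natDegree = M - 1 := by
      have h2 := Polynomial.natDegree_mul (Polynomial.X_sub_C_ne_zero z) hG'ne
      rw [hfact, hdeg, Polynomial.natDegree_X_sub_C] at h2
      omega
    have hlcG' : 0 < G'.leadingCoeff := by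
      have h2 := Polynomial.leadingCoeff_mul (X - C z) G'
      rw [hfact, Polynomial.leadingCoeff_X_sub_C, one_mul] at h2
      rw [← h2]; exact hlc
    have heval : ∀ t, G.eval t = (t - z) * G'.eval t := fun t => by
      conv_lhs => rw [← hfact]
      simp
    set s' := s.erase y0 with hs'def
    have hins : insert y0 s' = s := Finset.insert_erase hy0mem
    have hy0nots' : y0 ∉ s' := Finset.notMem_erase y0 s
    have hcard' : s'.card = k := by
      rw [hs'def, Finset.card_erase_of_mem hy0mem, hcard]
      omega
    have hpos' : ∀ x ∈ s', 0 < x := fun x hx => hpos x (Finset.mem_of_mem_erase hx)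
    have hlt : ∀ x ∈ s', x < y0 := fun x hx =>
      lt_of_le_of_ne (s.le_max' x (Finset.mem_of_mem_erase hx)) (Finset.ne_of_mem_erase hx)
    have hNGTs : ∀ y ∈ s', NGT s y = NGT s' y + 1 := fun y hy => by
      rw [← hins, NGT_insert_of_lt hy0nots' (hlt y hy)]
    have hsign' : ∀ y ∈ s', 0 < (-1:ℝ)^(NGT s' y + 1) * G'.eval y := by
      intro y hy
      have h1 := hsign y (Finset.mem_of_mem_erase hy)
      rw [hNGTs y hy, heval y] at h1
      have e2 : (-1:ℝ)^(NGT s' y + 1 + 1) = -((-1:ℝ)^(NGT s' y + 1)) := by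
        rw [pow_succ]; ring
      rw [e2] at h1
      have hyz : 0 < z - y := by have := hlt y hy; linarith
      have h2 : 0 < (z - y) * ((-1:ℝ)^(NGT s' y + 1) * G'.eval y) := by nlinarith
      rcases mul_pos_iff.1 h2 with ⟨_, h⟩ | ⟨h, _⟩
      · exact h
      · linarith
    have h0' : 0 < (-1:ℝ)^(M-1) * G'.eval 0 := by
      have h1 := h0
      rw [heval 0] at h1
      have hM1 : M = (M - 1) + 1 := by omega
      rw [hM1, pow_succ] at h1
      have h2 : 0 < z * ((-1:ℝ)^(M-1) * G'.eval 0) := by nlinarith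
      rcases mul_pos_iff.1 h2 with ⟨_, h⟩ | ⟨h, _⟩
      · exact h
      · linarith
    obtain ⟨u', hu'card, hu'pos, hu'root, hu'c3, hu'c4⟩ :=
      ih s' hcard' hpos' G' (M-1) hdegG' (by omega) hlcG' hsign' h0'
    have hu'rootG : ∀ x ∈ u', G.eval x = 0 := fun x hx => by
      rw [heval x, hu'root x hx, mul_zero]
    -- no element of u' exceeds y0
    have hmax0 : ∀ w ∈ u', y0 < w → NGT u' w = 0 := by
      intro w hw hww
      have h1 : NGT s' w = 0 :=
        NGT_eq_zero_iff.2 (fun x hx => not_lt.2 (le_of_lt (lt_trans (hlt x hx) hww)))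
      rw [← hu'c4 w hw, h1]
    have hG'y0 : 0 < G'.eval y0 := by
      have h1 : (y0 - z) * G'.eval y0 < 0 := by rw [← heval y0]; exact hGy0neg
      rcases mul_neg_iff.1 h1 with ⟨h2, _⟩ | ⟨_, h2⟩
      · linarith
      · exact h2
    have hy0notu' : y0 ∉ u' := fun h => by
      rw [hu'root y0 h] at hG'y0; exact lt_irrefl _ hG'y0
    have hparity := sign_eval G' u' (by rw [hu'card, hdegG']) hu'root hlcG' y0 hy0notu'
    have hcard_le : NGT u' y0 ≤ 1 := by
      rw [NGT, Finset.card_le_one]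
      intro w1 h1 w2 h2
      obtain ⟨hw1u, hw1gt⟩ := Finset.mem_filter.1 h1
      obtain ⟨hw2u, hw2gt⟩ := Finset.mem_filter.1 h2
      by_contra hne2
      rcases lt_or_gt_of_ne hne2 with h | h
      · have ha1 := hmax0 w1 hw1u hw1gt
        have ha2 := NGT_pos hw2u h
        omega
      · have ha1 := hmax0 w2 hw2u hw2gt
        have ha2 := NGT_pos hw1u h
        omega
    have hNu'y0 : NGT u' y0 = 0 := by
      by_contra h
      have h1 : NGT u' y0 = 1 := by omega
      rw [h1, pow_one] at hparity
      linarith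
    have hu'lty0 : ∀ w ∈ u', w < y0 := by
      intro w hw
      have h1 : ¬ y0 < w := fun hgt => by
        have := NGT_pos hw hgt; omega
      exact lt_of_le_of_ne (not_lt.1 h1) (fun h => hy0notu' (h ▸ hw))
    have hznotu' : z ∉ u' := fun h => by
      have := hu'lty0 z h; linarith
    refine ⟨insert z u', ?_, ?_, ?_, ?_, ?_⟩
    · rw [Finset.card_insert_of_notMem hznotu', hu'card]; omega
    · intro x hx
      rcases Finset.mem_insert.1 hx with rfl | hx
      · exact hzpos
      · exact hu'pos x hx
    · intro x hx
      rcases Finset.mem_insert.1 hx with rfl | hx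
      · exact hzroot
      · exact hu'rootG x hx
    · intro y hy
      rcases eq_or_ne y y0 with rfl | hne2
      · rw [NGT_insert_of_lt hznotu' hzy0, hNu'y0, hNGTy0]
      · have hy' : y ∈ s' := Finset.mem_erase.2 ⟨hne2, hy⟩
        rw [NGT_insert_of_lt hznotu' (lt_trans (hlt y hy') hzy0), hu'c3 y hy', hNGTs y hy']
    · intro w hw
      rcases Finset.mem_insert.1 hw with rfl | hw
      · have h1 : NGT s w = 0 := NGT_eq_zero_iff.2
          (fun x hx => not_lt.2 (le_of_lt (lt_of_le_of_lt (s.le_max' x hx) hzy0)))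
        have h2 : NGT (insert w u') w = 0 := by
          rw [NGT_insert_of_ge (lt_irrefl w)]
          exact NGT_eq_zero_iff.2
            (fun x hx => not_lt.2 (le_of_lt (lt_trans (hu'lty0 x hx) hzy0)))
        rw [h1, h2]
      · have hwz : w < z := lt_trans (hu'lty0 w hw) hzy0
        rw [NGT_insert_of_lt hznotu' hwz, ← hins,
          NGT_insert_of_lt hy0nots' (hu'lty0 w hw), hu'c4 w hw]



lemma nt0 {e : ℕ} (he : 0 < e) (j ρ : ℕ) (hρ : ρ < e) :
    (e * j + ρ) % e = ρ ∧ (e * j + ρ) / e = j := by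
  constructor
  · rw [Nat.mul_add_mod, Nat.mod_eq_of_lt hρ]
  · rw [Nat.mul_add_div he, Nat.div_eq_of_lt hρ, add_zero]

lemma nt2 {d n : ℕ} (h : n % (d+1) < d) :
    (n+1) % (d+1) = n % (d+1) + 1 ∧ (n+1) / (d+1) = n / (d+1) := by
  have hdm := Nat.div_add_mod n (d+1)
  have h2 : n + 1 = (d+1) * (n / (d+1)) + (n % (d+1) + 1) := by omega
  rw [h2]
  exact nt0 (by omega) _ _ (by omega)

lemma nt3 {d n : ℕ} (h : n % (d+1) = d) :
    (n+1) % (d+1) = 0 ∧ (n+1) / (d+1) = n / (d+1) + 1 := by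
  have hdm := Nat.div_add_mod n (d+1)
  have h2 : n + 1 = (d+1) * (n / (d+1) + 1) + 0 := by
    rw [Nat.mul_add, Nat.mul_one]; omega
  rw [h2]
  exact nt0 (by omega) _ _ (by omega)

lemma nt4 {d n : ℕ} (h : n % (d+1) = d) : d ≤ n :=
  le_trans (le_of_eq h.symm) (Nat.mod_le n (d+1))

lemma nt5 {d n : ℕ} (hdn : d ≤ n) (h : n % (d+1) < d) :
    (n-d) % (d+1) = n % (d+1) + 1 ∧ (n-d) / (d+1) = n / (d+1) - 1 ∧ 1 ≤ n / (d+1) := by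
  have hdm := Nat.div_add_mod n (d+1)
  have hnd : d + 1 ≤ n := by
    rcases Nat.lt_or_ge n (d+1) with hlt | hge
    · have h3 : n % (d+1) = n := Nat.mod_eq_of_lt hlt
      omega
    · exact hge
  have hj : 1 ≤ n / (d+1) := (Nat.one_le_div_iff (by omega)).2 hnd
  have h5 : d + 1 ≤ (d+1) * (n / (d+1)) := by
    have h6 := Nat.mul_le_mul_left (d+1) hj
    rwa [Nat.mul_one] at h6
  have h2 : n - d = (d+1) * (n / (d+1) - 1) + (n % (d+1) + 1) := by
    rw [Nat.mul_sub, Nat.mul_one]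
    omega
  rw [h2]
  obtain ⟨hm, hdv⟩ := nt0 (show 0 < d+1 by omega) (n / (d+1) - 1) (n % (d+1) + 1) (by omega)
  exact ⟨hm, by omega⟩

lemma nt6 {d n : ℕ} (h : n % (d+1) = d) :
    (n-d) % (d+1) = 0 ∧ (n-d) / (d+1) = n / (d+1) := by
  have hdm := Nat.div_add_mod n (d+1)
  have h2 : n - d = (d+1) * (n / (d+1)) + 0 := by omega
  rw [h2]
  exact nt0 (by omega) _ _ (by omega)

lemma nt7 {d m n : ℕ} (h1 : m < n) (h2 : n - m ≤ d + 1) :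
    n / (d+1) = m / (d+1) ∨ n / (d+1) = m / (d+1) + 1 := by
  have ha : m / (d+1) ≤ n / (d+1) := Nat.div_le_div_right (by omega)
  have hb : n / (d+1) ≤ (m + (d+1)) / (d+1) := Nat.div_le_div_right (by omega)
  rw [Nat.add_div_right _ (by omega)] at hb
  omega

lemma nt8 {d : ℕ} (j ρ : ℕ) (hρ : ρ ≤ d) :
    (j * (d+1) + ρ) % (d+1) = ρ ∧ (j * (d+1) + ρ) / (d+1) = j := by
  have h2 : j * (d+1) + ρ = (d+1) * j + ρ := by ring_nf
  rw [h2]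
  exact nt0 (by omega) _ _ (by omega)

lemma coeff_sum_CX (c : ℕ → ℝ) (N k : ℕ) :
    (∑ i ∈ Finset.range N, C (c i) * X ^ i).coeff k = if k < N then c k else 0 := by
  rw [Polynomial.finset_sum_coeff]
  have h1 : ∀ i ∈ Finset.range N, (C (c i) * X ^ i).coeff k = if i = k then c i else 0 := by
    intro i _
    rw [Polynomial.coeff_C_mul, Polynomial.coeff_X_pow]
    by_cases h : i = k
    · subst h; simp
    · rw [if_neg (fun hh => h hh.symm), mul_zero, if_neg h]
  rw [Finset.sum_congr rfl h1, Finset.sum_ite_eq' (Finset.range N) k c]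
  simp [Finset.mem_range]

lemma comp_pow_expand (A : Polynomial ℝ) (e ρ : ℕ) :
    X ^ ρ * A.comp (X ^ e) =
      ∑ i ∈ Finset.range (A.natDegree + 1), C (A.coeff i) * X ^ (ρ + i * e) := by
  have h1 : A.comp (X ^ e) =
      ∑ i ∈ Finset.range (A.natDegree + 1), C (A.coeff i) * (X ^ e) ^ i := by
    conv_lhs => rw [A.as_sum_range]
    simp only [Polynomial.comp, Polynomial.eval₂_finset_sum, Polynomial.eval₂_monomial]
  rw [h1, Finset.mul_sum]
  refine Finset.sum_congr rfl (fun i _ => ?_)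
  ring

lemma W_coeff_hit (A : Polynomial ℝ) (e ρ i : ℕ) (he : 0 < e) :
    (X ^ ρ * A.comp (X ^ e)).coeff (ρ + i * e) = A.coeff i := by
  rw [comp_pow_expand, Polynomial.finset_sum_coeff]
  have h1 : ∀ i' ∈ Finset.range (A.natDegree + 1),
      (C (A.coeff i') * X ^ (ρ + i' * e)).coeff (ρ + i * e) =
        if i' = i then A.coeff i' else 0 := by
    intro i' _
    rw [Polynomial.coeff_C_mul, Polynomial.coeff_X_pow]
    have h2 : (ρ + i * e = ρ + i' * e) ↔ i' = i := by
      constructor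
      · intro h
        have h3 : i * e = i' * e := by omega
        exact (Nat.eq_of_mul_eq_mul_right he h3).symm
      · intro h; rw [h]
    split_ifs with ha hb hb
    · simp
    · exact absurd (h2.1 ha) hb
    · exact absurd (h2.2 hb) ha
    · simp
  rw [Finset.sum_congr rfl h1, Finset.sum_ite_eq' (Finset.range (A.natDegree + 1)) i A.coeff]
  split_ifs with h
  · rfl
  · exact (Polynomial.coeff_eq_zero_of_natDegree_lt (by simp only [Finset.mem_range] at h; omega)).symm

lemma W_coeff_miss (A : Polynomial ℝ) (e ρ k : ℕ) (hρ : ρ < e) (hk : k % e ≠ ρ) :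
    (X ^ ρ * A.comp (X ^ e)).coeff k = 0 := by
  rw [comp_pow_expand, Polynomial.finset_sum_coeff]
  apply Finset.sum_eq_zero
  intro i _
  rw [Polynomial.coeff_C_mul, Polynomial.coeff_X_pow, if_neg, mul_zero]
  intro h
  apply hk
  rw [h, Nat.add_mul_mod_self_right, Nat.mod_eq_of_lt hρ]

lemma W_inj {A B : Polynomial ℝ} (e ρ : ℕ) (he : 0 < e)
    (h : X ^ ρ * A.comp (X ^ e) = X ^ ρ * B.comp (X ^ e)) : A = B := by
  ext i
  have h2 := congrArg (fun p => Polynomial.coeff p (ρ + i * e)) h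
  simpa only [W_coeff_hit A e ρ i he, W_coeff_hit B e ρ i he] using h2



structure Hyp (d : ℕ) (q : ℕ → Polynomial ℝ) (r a : ℕ → ℝ) : Prop where
  hd : 0 < d
  hdeg : ∀ n, (q n).natDegree = n
  hq0 : 0 < (q 0).coeff 0
  hr : ∀ n, 0 < r n
  ha : ∀ n, 0 < a n
  hrec : ∀ n, X * q n = C (r (n+1)) * q (n+1) + (if d ≤ n then C (a (n-d)) * q (n-d) else 0)

variable {d : ℕ} {q : ℕ → Polynomial ℝ} {r a : ℕ → ℝ}

lemma qne (H : Hyp d q r a) (n : ℕ) : q n ≠ 0 := by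
  cases n with
  | zero =>
    intro h
    have h0 := H.hq0
    rw [h] at h0
    simp at h0
  | succ n =>
    intro h
    have h2 := H.hdeg (n+1)
    rw [h] at h2
    simp at h2

lemma lcq (H : Hyp d q r a) (n : ℕ) : 0 < (q n).leadingCoeff := by
  induction n with
  | zero =>
    rw [Polynomial.leadingCoeff, H.hdeg 0]
    exact H.hq0
  | succ n ih =>
    have hck := congrArg (fun p => p.coeff (n+1)) (H.hrec n)
    simp only [Polynomial.coeff_add, Polynomial.coeff_C_mul, Polynomial.coeff_X_mul] at hck
    have hz : (if d ≤ n then C (a (n-d)) * q (n-d) else 0).coeff (n+1) = 0 := by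
      split_ifs with h
      · rw [Polynomial.coeff_C_mul]
        rw [Polynomial.coeff_eq_zero_of_natDegree_lt (by rw [H.hdeg]; omega), mul_zero]
      · simp
    rw [hz, add_zero] at hck
    -- hck : (q n).coeff n = r (n+1) * (q (n+1)).coeff (n+1)
    have hlcn : (q n).coeff n = (q n).leadingCoeff := by rw [Polynomial.leadingCoeff, H.hdeg]
    have hlcn1 : (q (n+1)).coeff (n+1) = (q (n+1)).leadingCoeff := by
      rw [Polynomial.leadingCoeff, H.hdeg]
    rw [hlcn, hlcn1] at hck
    have h2 : 0 < r (n+1) * (q (n+1)).leadingCoeff := by rw [← hck]; exact ih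
    rcases mul_pos_iff.1 h2 with ⟨_, h3⟩ | ⟨h3, _⟩
    · exact h3
    · linarith [H.hr (n+1)]

lemma support_mod (H : Hyp d q r a) : ∀ n k, (q n).coeff k ≠ 0 → k % (d+1) = n % (d+1) := by
  intro n
  induction n using Nat.strong_induction_on with
  | _ n ih =>
    cases n with
    | zero =>
      intro k hk
      have h1 : k ≤ 0 := by
        have := Polynomial.le_natDegree_of_ne_zero hk
        rw [H.hdeg 0] at this
        exact this
      interval_cases k
      rfl
    | succ n =>
      intro k hk
      have hck := congrArg (fun p => p.coeff k) (H.hrec n)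
      simp only [Polynomial.coeff_add, Polynomial.coeff_C_mul] at hck
      by_cases hX : (X * q n).coeff k ≠ 0
      · -- k = k'+1 and (q n).coeff k' ≠ 0
        cases k with
        | zero =>
          rw [Polynomial.mul_coeff_zero, Polynomial.coeff_X_zero, zero_mul] at hX
          exact absurd rfl hX
        | succ k' =>
          rw [Polynomial.coeff_X_mul] at hX
          have h1 := ih n (by omega) k' hX
          have h2 : (k' + 1) % (d+1) = (n + 1) % (d+1) := Nat.ModEq.add_right 1 h1
          exact h2
      · push_neg at hX
        rw [hX] at hck
        have hIT : (if d ≤ n then C (a (n-d)) * q (n-d) else 0).coeff k ≠ 0 := by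
          intro h0
          rw [h0, add_zero] at hck
          exact hk (by
            have hr0 : r (n+1) ≠ 0 := (H.hr (n+1)).ne'
            field_simp at hck
            exact (mul_eq_zero.1 hck.symm).resolve_left hr0)
        have hdn : d ≤ n := by
          by_contra h0
          rw [if_neg h0] at hIT
          simp at hIT
        rw [if_pos hdn, Polynomial.coeff_C_mul] at hIT
        have h1 : (q (n-d)).coeff k ≠ 0 := by
          intro h0; rw [h0, mul_zero] at hIT; exact hIT rfl
        have h2 := ih (n-d) (by omega) k h1
        have h3 : (n + 1) % (d+1) = (n - d) % (d+1) := by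
          have h4 : n + 1 = (n - d) + (d + 1) := by omega
          rw [h4, Nat.add_mod_right]
        rw [h2, h3]


def Pt (d : ℕ) (q : ℕ → Polynomial ℝ) (n : ℕ) : Polynomial ℝ :=
  ∑ i ∈ Finset.range (n / (d+1) + 1), C ((q n).coeff (n % (d+1) + i * (d+1))) * X ^ i

lemma Pt_coeff (d : ℕ) (q : ℕ → Polynomial ℝ) (n i : ℕ) :
    (Pt d q n).coeff i =
      if i < n / (d+1) + 1 then (q n).coeff (n % (d+1) + i * (d+1)) else 0 :=
  coeff_sum_CX _ _ _

lemma q_eq_W (H : Hyp d q r a) (n : ℕ) :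
    q n = X ^ (n % (d+1)) * (Pt d q n).comp (X ^ (d+1)) := by
  ext k
  by_cases hk : k % (d+1) = n % (d+1)
  · have hdm := Nat.div_add_mod k (d+1)
    have hk2 : k = n % (d+1) + (k / (d+1)) * (d+1) := by
      have h3 : (d+1) * (k / (d+1)) = (k / (d+1)) * (d+1) := Nat.mul_comm _ _
      omega
    conv_lhs => rw [hk2]
    conv_rhs => rw [hk2]
    rw [W_coeff_hit _ _ _ _ (by omega), Pt_coeff]
    split_ifs with h
    · rfl
    · have h2 : n / (d+1) + 1 ≤ k / (d+1) := by omega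
      have h3 : n < k := by
        have h4 := Nat.div_add_mod n (d+1)
        have h5 := Nat.mul_le_mul_left (d+1) h2
        have h6 : (d+1) * (n / (d+1) + 1) = (d+1) * (n / (d+1)) + (d+1) := by ring
        have h7 : (d+1) * (k / (d+1)) = (k / (d+1)) * (d+1) := Nat.mul_comm _ _
        omega
      exact Polynomial.coeff_eq_zero_of_natDegree_lt (by rw [H.hdeg]; omega)
  · rw [W_coeff_miss _ _ _ _ (Nat.mod_lt n (by omega)) hk]
    by_contra h0
    exact hk (support_mod H n k h0)

lemma Pt_natDegree (H : Hyp d q r a) (n : ℕ) :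
    (Pt d q n).natDegree = n / (d+1) := by
  have hle : (Pt d q n).natDegree ≤ n / (d+1) := by
    apply Polynomial.natDegree_le_iff_coeff_eq_zero.2
    intro N hN
    rw [Pt_coeff, if_neg (by omega)]
  have hco : (Pt d q n).coeff (n / (d+1)) ≠ 0 := by
    rw [Pt_coeff, if_pos (by omega)]
    have h2 : n % (d+1) + (n / (d+1)) * (d+1) = n := by
      have hdm := Nat.div_add_mod n (d+1)
      have h3 : (d+1) * (n / (d+1)) = (n / (d+1)) * (d+1) := Nat.mul_comm _ _
      omega
    rw [h2]
    have h4 : (q n).coeff n = (q n).leadingCoeff := by rw [Polynomial.leadingCoeff, H.hdeg]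
    rw [h4]
    exact (lcq H n).ne'
  exact le_antisymm hle (Polynomial.le_natDegree_of_ne_zero hco)

lemma Pt_leadingCoeff (H : Hyp d q r a) (n : ℕ) :
    (Pt d q n).leadingCoeff = (q n).leadingCoeff := by
  rw [Polynomial.leadingCoeff, Pt_natDegree H, Pt_coeff, if_pos (by omega)]
  have h2 : n % (d+1) + (n / (d+1)) * (d+1) = n := by
    have hdm := Nat.div_add_mod n (d+1)
    have h3 : (d+1) * (n / (d+1)) = (n / (d+1)) * (d+1) := Nat.mul_comm _ _
    omega
  rw [h2, Polynomial.leadingCoeff, H.hdeg]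

lemma Pt_lc_pos (H : Hyp d q r a) (n : ℕ) : 0 < (Pt d q n).leadingCoeff := by
  rw [Pt_leadingCoeff H]; exact lcq H n

lemma Pt_rec_low (H : Hyp d q r a) (n : ℕ) (hn : n < d) :
    Pt d q n = C (r (n+1)) * Pt d q (n+1) := by
  have hrn := H.hrec n
  rw [if_neg (by omega), add_zero] at hrn
  have hmod : n % (d+1) < d := by
    have : n % (d+1) ≤ n := Nat.mod_le n (d+1)
    omega
  obtain ⟨hm1, _⟩ := nt2 hmod
  apply W_inj (d+1) (n % (d+1) + 1) (by omega)
  rw [q_eq_W H n, q_eq_W H (n+1), hm1] at hrn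
  calc X ^ (n % (d+1) + 1) * (Pt d q n).comp (X ^ (d+1))
      = X * (X ^ (n % (d+1)) * (Pt d q n).comp (X ^ (d+1))) := by ring
    _ = C (r (n+1)) * (X ^ (n % (d+1) + 1) * (Pt d q (n+1)).comp (X ^ (d+1))) := by
        rw [hrn]
    _ = X ^ (n % (d+1) + 1) * (C (r (n+1)) * Pt d q (n+1)).comp (X ^ (d+1)) := by
        rw [Polynomial.mul_comp, Polynomial.C_comp]; ring

lemma Pt_rec_mid (H : Hyp d q r a) (n : ℕ) (hdn : d ≤ n) (hmod : n % (d+1) < d) :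
    Pt d q n = C (r (n+1)) * Pt d q (n+1) + C (a (n-d)) * Pt d q (n-d) := by
  have hrn := H.hrec n
  rw [if_pos hdn] at hrn
  obtain ⟨hm1, _⟩ := nt2 hmod
  obtain ⟨hm2, _, _⟩ := nt5 hdn hmod
  apply W_inj (d+1) (n % (d+1) + 1) (by omega)
  rw [q_eq_W H n, q_eq_W H (n+1), q_eq_W H (n-d), hm1, hm2] at hrn
  calc X ^ (n % (d+1) + 1) * (Pt d q n).comp (X ^ (d+1))
      = X * (X ^ (n % (d+1)) * (Pt d q n).comp (X ^ (d+1))) := by ring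
    _ = C (r (n+1)) * (X ^ (n % (d+1) + 1) * (Pt d q (n+1)).comp (X ^ (d+1))) +
        C (a (n-d)) * (X ^ (n % (d+1) + 1) * (Pt d q (n-d)).comp (X ^ (d+1))) := by rw [hrn]
    _ = X ^ (n % (d+1) + 1) *
          (C (r (n+1)) * Pt d q (n+1) + C (a (n-d)) * Pt d q (n-d)).comp (X ^ (d+1)) := by
        rw [Polynomial.add_comp, Polynomial.mul_comp, Polynomial.mul_comp,
          Polynomial.C_comp, Polynomial.C_comp]; ring

set_option maxHeartbeats 2000000 in
lemma Pt_rec_high (H : Hyp d q r a) (n : ℕ) (hmod : n % (d+1) = d) :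
    X * Pt d q n = C (r (n+1)) * Pt d q (n+1) + C (a (n-d)) * Pt d q (n-d) := by
  have hdn : d ≤ n := nt4 hmod
  have hrn := H.hrec n
  rw [if_pos hdn] at hrn
  obtain ⟨hm1, _⟩ := nt3 hmod
  obtain ⟨hm2, _⟩ := nt6 hmod
  apply W_inj (d+1) 0 (by omega)
  rw [q_eq_W H n, q_eq_W H (n+1), q_eq_W H (n-d), hm1, hm2, hmod] at hrn
  calc X ^ 0 * (X * Pt d q n).comp (X ^ (d+1))
      = X * (X ^ d * (Pt d q n).comp (X ^ (d+1))) := by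
        rw [Polynomial.mul_comp, Polynomial.X_comp]; ring
    _ = C (r (n+1)) * (X ^ 0 * (Pt d q (n+1)).comp (X ^ (d+1))) +
        C (a (n-d)) * (X ^ 0 * (Pt d q (n-d)).comp (X ^ (d+1))) := by rw [hrn]
    _ = X ^ 0 * (C (r (n+1)) * Pt d q (n+1) + C (a (n-d)) * Pt d q (n-d)).comp (X ^ (d+1)) := by
        rw [Polynomial.add_comp, Polynomial.mul_comp, Polynomial.mul_comp,
          Polynomial.C_comp, Polynomial.C_comp]; ring

lemma pos_fac {r x : ℝ} (hr : 0 < r) (h : 0 < r * x) : 0 < x := by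
  rcases mul_pos_iff.1 h with ⟨_, hx⟩ | ⟨hneg, _⟩
  · exact hx
  · linarith

def Nice (F : Polynomial ℝ) (s : Finset ℝ) : Prop :=
  s.card = F.natDegree ∧ (∀ x ∈ s, 0 < x) ∧ (∀ x ∈ s, F.eval x = 0) ∧ 0 < F.leadingCoeff

def Cond (s u : Finset ℝ) : Prop :=
  (∀ y ∈ s, NGT u y = NGT s y + 1) ∧ (∀ z ∈ u, NGT s z = NGT u z)

def RS (F : Polynomial ℝ) : Finset ℝ := F.roots.toFinset

lemma nice_RS {F : Polynomial ℝ} {s : Finset ℝ} (h : Nice F s) : RS F = s := by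
  obtain ⟨hc, hp, hrt, hlc⟩ := h
  have hF : F ≠ 0 := Polynomial.leadingCoeff_ne_zero.1 hlc.ne'
  ext x
  rw [RS, Multiset.mem_toFinset, Polynomial.mem_roots hF]
  exact roots_eq F s hc hrt hlc.ne' x

lemma nice_sign_notmem {F : Polynomial ℝ} {s : Finset ℝ} (h : Nice F s) {t : ℝ} (ht : t ∉ s) :
    0 < (-1:ℝ)^(NGT s t) * F.eval t :=
  sign_eval F s h.1 h.2.2.1 h.2.2.2 t ht

lemma nice_sign_zero {F : Polynomial ℝ} {s : Finset ℝ} (h : Nice F s) :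
    0 < (-1:ℝ)^(F.natDegree) * F.eval 0 := by
  have h0 : (0:ℝ) ∉ s := fun h0 => lt_irrefl 0 (h.2.1 0 h0)
  have h1 := nice_sign_notmem h h0
  have hN : NGT s 0 = F.natDegree := by
    rw [NGT, Finset.filter_true_of_mem (fun x hx => h.2.1 x hx), h.1]
  rwa [hN] at h1

lemma cond_disjoint {s u : Finset ℝ} (h : Cond s u) {y : ℝ} (hy : y ∈ s) : y ∉ u := by
  intro hyu
  have h1 := h.1 y hy
  have h2 := h.2 y hyu
  omega

lemma cond_disjoint' {s u : Finset ℝ} (h : Cond s u) {z : ℝ} (hz : z ∈ u) : z ∉ s := by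
  intro hzs
  have h1 := h.1 z hzs
  have h2 := h.2 z hz
  omega

lemma sign_right {G : Polynomial ℝ} {s u : Finset ℝ} (hG : Nice G u) (hc : Cond s u)
    {y : ℝ} (hy : y ∈ s) : 0 < (-1:ℝ)^(NGT s y + 1) * G.eval y := by
  have h1 := nice_sign_notmem hG (cond_disjoint hc hy)
  rwa [hc.1 y hy] at h1

lemma sign_left {F : Polynomial ℝ} {s u : Finset ℝ} (hF : Nice F s) (hc : Cond s u)
    {z : ℝ} (hz : z ∈ u) : 0 < (-1:ℝ)^(NGT u z) * F.eval z := by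
  have h1 := nice_sign_notmem hF (cond_disjoint' hc hz)
  rwa [hc.2 z hz] at h1

lemma main_inv (H : Hyp d q r a) (N : ℕ) :
    (∀ n, n ≤ N → Nice (Pt d q n) (RS (Pt d q n))) ∧
    (∀ m n, m < n → n ≤ N → n - m ≤ d + 1 → Cond (RS (Pt d q m)) (RS (Pt d q n))) := by
  induction N with
  | zero =>
    constructor
    · intro n hn
      interval_cases n
      have hnice : Nice (Pt d q 0) ∅ := by
        refine ⟨?_, by simp, by simp, Pt_lc_pos H 0⟩
        rw [Pt_natDegree H, Nat.zero_div, Finset.card_empty]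
      rw [nice_RS hnice]
      exact hnice
    · intro m n h1 h2 _
      omega
  | succ N ihN =>
    obtain ⟨hNice, hCond⟩ := ihN
    have hd0 : 0 < d := H.hd
    -- sign conditions at the roots of the polynomials in the window
    have hsign_all : ∀ m, m ≤ N → N ≤ m + d →
        ∀ y ∈ RS (Pt d q m),
          0 < (-1:ℝ)^(NGT (RS (Pt d q m)) y + 1) * (Pt d q (N+1)).eval y := by
      intro m hm1 hm2 y hy
      have hNm := hNice m hm1
      have hyroot : ∀ k, k ≤ N → y ∈ RS (Pt d q k) → (Pt d q k).eval y = 0 := fun k hk hyk =>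
        (hNice k hk).2.2.1 y hyk
      rcases Nat.lt_or_ge (N % (d+1)) d with hmod | hmod'
      · rcases Nat.lt_or_ge N d with hNd | hNd
        · -- all root sets in sight are empty
          exfalso
          have hcard0 : (RS (Pt d q m)).card = 0 := by
            rw [hNm.1, Pt_natDegree H, Nat.div_eq_of_lt (by omega)]
          rw [Finset.card_eq_zero] at hcard0
          rw [hcard0] at hy
          simp at hy
        · -- middle case
          have hrec1 := Pt_rec_mid H N hNd hmod
          have hev : (Pt d q N).eval y =
              r (N+1) * (Pt d q (N+1)).eval y + a (N-d) * (Pt d q (N-d)).eval y := by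
            rw [hrec1]; simp
          set em := NGT (RS (Pt d q m)) y with hem
          have key : r (N+1) * ((-1:ℝ)^(em+1) * (Pt d q (N+1)).eval y) =
              (-1:ℝ)^(em+1) * (Pt d q N).eval y +
                a (N-d) * (-((-1:ℝ)^(em+1)) * (Pt d q (N-d)).eval y) := by
            rw [hev]; ring
          have hpow : -((-1:ℝ)^(em+1)) = (-1:ℝ)^em := by rw [pow_succ]; ring
          rw [hpow] at key
          have hAB : 0 < (-1:ℝ)^(em+1) * (Pt d q N).eval y +
              a (N-d) * ((-1:ℝ)^em * (Pt d q (N-d)).eval y) := by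
            rcases eq_or_ne m N with rfl | hmN
            · have hE : (Pt d q m).eval y = 0 := hyroot m le_rfl hy
              have hB : 0 < (-1:ℝ)^em * (Pt d q (m-d)).eval y :=
                sign_left (hNice (m-d) (by omega))
                  (hCond (m-d) m (by omega) le_rfl (by omega)) hy
              rw [hE]
              have := mul_pos (H.ha (m-d)) hB
              linarith
            · have hA : 0 < (-1:ℝ)^(em+1) * (Pt d q N).eval y :=
                sign_right (hNice N le_rfl)
                  (hCond m N (by omega) le_rfl (by omega)) hy
              rcases eq_or_ne m (N-d) with hmNd | hmNd
              · have hE2 : (Pt d q (N-d)).eval y = 0 := by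
                  rw [← hmNd]; exact hyroot m hm1 hy
                rw [hE2]
                simpa using hA
              · have hB : 0 < (-1:ℝ)^em * (Pt d q (N-d)).eval y :=
                  sign_left (hNice (N-d) (by omega))
                    (hCond (N-d) m (by omega) hm1 (by omega)) hy
                have := mul_pos (H.ha (N-d)) hB
                linarith
          have h2 : 0 < r (N+1) * ((-1:ℝ)^(em+1) * (Pt d q (N+1)).eval y) := by
            rw [key]; exact hAB
          exact pos_fac (H.hr (N+1)) h2
      · -- high case
        have hmodEq : N % (d+1) = d := by
          have := Nat.mod_lt N (show 0 < d+1 by omega)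
          omega
        have hNd : d ≤ N := nt4 hmodEq
        have hrec1 := Pt_rec_high H N hmodEq
        have hev : y * (Pt d q N).eval y =
            r (N+1) * (Pt d q (N+1)).eval y + a (N-d) * (Pt d q (N-d)).eval y := by
          have := congrArg (fun p => Polynomial.eval y p) hrec1
          simpa using this
        set em := NGT (RS (Pt d q m)) y with hem
        have hypos : 0 < y := hNm.2.1 y hy
        have key : r (N+1) * ((-1:ℝ)^(em+1) * (Pt d q (N+1)).eval y) =
            y * ((-1:ℝ)^(em+1) * (Pt d q N).eval y) +
              a (N-d) * (-((-1:ℝ)^(em+1)) * (Pt d q (N-d)).eval y) := by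
          have h3 : (-1:ℝ)^(em+1) * (y * (Pt d q N).eval y) =
              (-1:ℝ)^(em+1) * (r (N+1) * (Pt d q (N+1)).eval y +
                a (N-d) * (Pt d q (N-d)).eval y) := by rw [hev]
          nlinarith [h3]
        have hpow : -((-1:ℝ)^(em+1)) = (-1:ℝ)^em := by rw [pow_succ]; ring
        rw [hpow] at key
        have hAB : 0 < y * ((-1:ℝ)^(em+1) * (Pt d q N).eval y) +
            a (N-d) * ((-1:ℝ)^em * (Pt d q (N-d)).eval y) := by
          rcases eq_or_ne m N with rfl | hmN
          · have hE : (Pt d q m).eval y = 0 := hyroot m le_rfl hy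
            have hB : 0 < (-1:ℝ)^em * (Pt d q (m-d)).eval y :=
              sign_left (hNice (m-d) (by omega))
                (hCond (m-d) m (by omega) le_rfl (by omega)) hy
            rw [hE]
            have := mul_pos (H.ha (m-d)) hB
            linarith
          · have hA : 0 < (-1:ℝ)^(em+1) * (Pt d q N).eval y :=
              sign_right (hNice N le_rfl)
                (hCond m N (by omega) le_rfl (by omega)) hy
            have hyA : 0 < y * ((-1:ℝ)^(em+1) * (Pt d q N).eval y) := mul_pos hypos hA
            rcases eq_or_ne m (N-d) with hmNd | hmNd
            · have hE2 : (Pt d q (N-d)).eval y = 0 := by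
                rw [← hmNd]; exact hyroot m hm1 hy
              rw [hE2]
              simpa using hyA
            · have hB : 0 < (-1:ℝ)^em * (Pt d q (N-d)).eval y :=
                sign_left (hNice (N-d) (by omega))
                  (hCond (N-d) m (by omega) hm1 (by omega)) hy
              have := mul_pos (H.ha (N-d)) hB
              linarith
        have h2 : 0 < r (N+1) * ((-1:ℝ)^(em+1) * (Pt d q (N+1)).eval y) := by
          rw [key]; exact hAB
        exact pos_fac (H.hr (N+1)) h2
    -- sign condition at zero
    have hsign_zero : 0 < (-1:ℝ)^((N+1)/(d+1)) * (Pt d q (N+1)).eval 0 := by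
      rcases Nat.lt_or_ge (N % (d+1)) d with hmod | hmod'
      · rcases Nat.lt_or_ge N d with hNd | hNd
        · have hM0 : (N+1)/(d+1) = 0 := Nat.div_eq_of_lt (by omega)
          have hrec1 := Pt_rec_low H N hNd
          have hev : (Pt d q N).eval 0 = r (N+1) * (Pt d q (N+1)).eval 0 := by
            rw [hrec1]; simp
          have hs0 := nice_sign_zero (hNice N le_rfl)
          rw [Pt_natDegree H, Nat.div_eq_of_lt (by omega), pow_zero, one_mul, hev] at hs0
          rw [hM0, pow_zero, one_mul]
          exact pos_fac (H.hr (N+1)) hs0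
        · obtain ⟨_, hdiv1⟩ := nt2 hmod
          obtain ⟨_, hdiv2, hjpos⟩ := nt5 hNd hmod
          have hrec1 := Pt_rec_mid H N hNd hmod
          have hev : (Pt d q N).eval 0 =
              r (N+1) * (Pt d q (N+1)).eval 0 + a (N-d) * (Pt d q (N-d)).eval 0 := by
            rw [hrec1]; simp
          have hsN := nice_sign_zero (hNice N le_rfl)
          rw [Pt_natDegree H] at hsN
          have hsNd := nice_sign_zero (hNice (N-d) (by omega))
          rw [Pt_natDegree H, hdiv2] at hsNd
          rw [hdiv1]
          set j := N / (d+1) with hj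
          have hkey : r (N+1) * ((-1:ℝ)^j * (Pt d q (N+1)).eval 0) =
              (-1:ℝ)^j * (Pt d q N).eval 0 +
                a (N-d) * ((-1:ℝ)^(j-1) * (Pt d q (N-d)).eval 0) := by
            have hj1 : j = (j - 1) + 1 := by omega
            have hp : (-1:ℝ)^j = (-1:ℝ)^(j-1) * (-1) := by
              conv_lhs => rw [hj1]
              rw [pow_succ]
            rw [hev, hp]; ring
          have hAB : 0 < (-1:ℝ)^j * (Pt d q N).eval 0 +
              a (N-d) * ((-1:ℝ)^(j-1) * (Pt d q (N-d)).eval 0) := by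
            have := mul_pos (H.ha (N-d)) hsNd
            linarith
          have h2 : 0 < r (N+1) * ((-1:ℝ)^j * (Pt d q (N+1)).eval 0) := by
            rw [hkey]; exact hAB
          exact pos_fac (H.hr (N+1)) h2
      · have hmodEq : N % (d+1) = d := by
          have := Nat.mod_lt N (show 0 < d+1 by omega)
          omega
        have hNd : d ≤ N := nt4 hmodEq
        obtain ⟨_, hdiv1⟩ := nt3 hmodEq
        obtain ⟨_, hdiv2⟩ := nt6 hmodEq
        have hrec1 := Pt_rec_high H N hmodEq
        have hev : (0:ℝ) = r (N+1) * (Pt d q (N+1)).eval 0 + a (N-d) * (Pt d q (N-d)).eval 0 := by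
          have h3 := congrArg (fun p => Polynomial.eval 0 p) hrec1
          simpa using h3
        have hsNd := nice_sign_zero (hNice (N-d) (by omega))
        rw [Pt_natDegree H, hdiv2] at hsNd
        rw [hdiv1]
        set j := N / (d+1) with hj
        have hkey : r (N+1) * ((-1:ℝ)^(j+1) * (Pt d q (N+1)).eval 0) =
            a (N-d) * ((-1:ℝ)^j * (Pt d q (N-d)).eval 0) := by
          rw [pow_succ]
          linear_combination ((-1:ℝ)^j) * hev
        have h2 : 0 < r (N+1) * ((-1:ℝ)^(j+1) * (Pt d q (N+1)).eval 0) := by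
          rw [hkey]
          exact mul_pos (H.ha (N-d)) hsNd
        exact pos_fac (H.hr (N+1)) h2
    -- apply the core lemma
    have hstep : ∀ m, m < N + 1 → N + 1 - m ≤ d + 1 →
        Cond (RS (Pt d q m)) (RS (Pt d q (N+1))) ∧
          Nice (Pt d q (N+1)) (RS (Pt d q (N+1))) := by
      intro m hm1 hm2
      have hNm := hNice m (by omega)
      obtain ⟨u, hu1, hu2, hu3, hu4, hu5⟩ := core (m/(d+1)) (RS (Pt d q m))
        (by rw [hNm.1, Pt_natDegree H]) hNm.2.1 (Pt d q (N+1)) ((N+1)/(d+1))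
        (Pt_natDegree H (N+1)) (nt7 hm1 hm2) (Pt_lc_pos H (N+1))
        (hsign_all m (by omega) (by omega)) hsign_zero
      have hniceu : Nice (Pt d q (N+1)) u :=
        ⟨by rw [hu1, Pt_natDegree H], hu2, hu3, Pt_lc_pos H (N+1)⟩
      have hRSu : RS (Pt d q (N+1)) = u := nice_RS hniceu
      rw [hRSu]
      exact ⟨⟨hu4, hu5⟩, hniceu⟩
    constructor
    · intro n hn
      rcases Nat.lt_or_ge n (N+1) with h | h
      · exact hNice n (by omega)
      · have hn1 : n = N + 1 := by omega
        subst hn1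
        exact (hstep N (by omega) (by omega)).2
    · intro m n h1 h2 h3
      rcases Nat.lt_or_ge n (N+1) with h | h
      · exact hCond m n h1 (by omega) h3
      · have hn1 : n = N + 1 := by omega
        subst hn1
        exact (hstep m h1 h3).1

end Stmt19

end

/-- Let `(q_n)` be real polynomials with `deg q_n = n`, `q₀ > 0`, satisfying
`z q_n(z) = r_{n+1} q_{n+1}(z) + a_{n-d} q_{n-d}(z)` for some `d ∈ ℕ` and positive reals
`r_n, a_n` (with `q_m = 0` for `m < 0`).  Then each `q_{j(d+1)+ρ}` (`0 ≤ ρ ≤ d`) has the form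
`z^ρ q̃(z^{d+1})` for a unique real polynomial `q̃` of degree `j`, and `q̃` has exactly `j`
distinct, real, positive roots. -/
theorem stmt_19 (d : ℕ) (hd : 0 < d) (q : ℕ → Polynomial ℝ) (r a : ℕ → ℝ)
    (hdeg : ∀ n, (q n).natDegree = n)
    (hq0 : 0 < (q 0).coeff 0)
    (hr : ∀ n, 0 < r n) (ha : ∀ n, 0 < a n)
    (hrec : ∀ n, X * q n =
      C (r (n + 1)) * q (n + 1) + (if d ≤ n then C (a (n - d)) * q (n - d) else 0)) :
    ∀ j ρ : ℕ, ρ ≤ d →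
      ∃! qt : Polynomial ℝ,
        q (j * (d + 1) + ρ) = X ^ ρ * qt.comp (X ^ (d + 1)) ∧
        qt.natDegree = j ∧
        ∃ s : Finset ℝ, s.card = j ∧ (∀ x ∈ s, 0 < x) ∧
          {x : ℝ | qt.eval x = 0} = (s : Set ℝ) := by
  intro j ρ hρ
  have H : Stmt19.Hyp d q r a := ⟨hd, hdeg, hq0, hr, ha, hrec⟩
  set n := j * (d+1) + ρ with hn
  obtain ⟨hmod, hdiv⟩ := Stmt19.nt8 j ρ hρ
  have hinv := Stmt19.main_inv H n
  have hNice := hinv.1 n le_rfl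
  have hq_eq : q n = X ^ ρ * (Stmt19.Pt d q n).comp (X ^ (d+1)) := by
    have h1 := Stmt19.q_eq_W H n
    rwa [hmod] at h1
  refine ⟨Stmt19.Pt d q n, ⟨hq_eq, ?_, ?_⟩, ?_⟩
  · rw [Stmt19.Pt_natDegree H, hdiv]
  · refine ⟨Stmt19.RS (Stmt19.Pt d q n), ?_, hNice.2.1, ?_⟩
    · rw [hNice.1, Stmt19.Pt_natDegree H, hdiv]
    · ext x
      simp only [Set.mem_setOf_eq, Finset.mem_coe]
      exact Stmt19.roots_eq _ _ hNice.1 hNice.2.2.1 hNice.2.2.2.ne' x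
  · rintro qt' ⟨h1', _, _⟩
    apply Stmt19.W_inj (d+1) ρ (by omega)
    rw [← h1']
    exact hq_eq
end
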